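/- arXiv:1706.08079 — 9 statements merged into one kernel-verified Lean document; each statement's English description precedes it below -/
import Mathlib

section
/- Let E, F, G be ordered Banach spaces and let Φ : E × F → G be a continuous positive bilinear map. Let (xₙ)ₙ≥1 be a decreasing sequence of positive elements of E with ‖xₙ‖ → 0, and let (yₙ)ₙ≥1 be a sequence of positive elements of F such that the series ∑ₙ Φ(xₙ, yₙ) converges in G. Then Φ(xₙ, ∑_{k=1}^{n} y_k) → 0 in G as n → ∞. -/
open Filter Topology

private lemma aux_sum_le' {G : Type*} [AddCommMonoid G] [PartialOrder G]
    [CovariantClass G G (· + ·) (· ≤ ·)] {s : Finset ℕ} {f g : ℕ → G}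
    (h : ∀ i ∈ s, f i ≤ g i) : ∑ i ∈ s, f i ≤ ∑ i ∈ s, g i := by
  classical
  induction s using Finset.induction with
  | empty => simp
  | @insert a s ha ih =>
    rw [Finset.sum_insert ha, Finset.sum_insert ha]
    calc f a + ∑ i ∈ s, f i ≤ f a + ∑ i ∈ s, g i := by
          exact add_le_add_right (ih fun i hi => h i (Finset.mem_insert_of_mem hi)) _
      _ = (∑ i ∈ s, g i) + f a := by rw [add_comm]
      _ ≤ (∑ i ∈ s, g i) + g a := add_le_add_right (h a (Finset.mem_insert_self _ _)) _
      _ = g a + ∑ i ∈ s, g i := by rw [add_comm]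

private lemma aux_sum_nonneg' {G : Type*} [AddCommMonoid G] [PartialOrder G]
    [CovariantClass G G (· + ·) (· ≤ ·)] {s : Finset ℕ} {f : ℕ → G}
    (h : ∀ i ∈ s, 0 ≤ f i) : 0 ≤ ∑ i ∈ s, f i := by
  have := aux_sum_le' (g := f) (s := s) (f := fun _ => (0:G)) h
  simpa using this

/-- Olivier-type theorem: if `Φ` is a continuous positive bilinear map between ordered
Banach spaces, `(xₙ)` is decreasing positive with `‖xₙ‖ → 0`, `(yₙ)` is positive, and
`∑ Φ(xₙ, yₙ)` converges, then `Φ(xₙ, ∑_{k=1}^n y_k) → 0`. -/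
theorem abel_partial_summation_stmt0
    {E F G : Type*}
    [NormedAddCommGroup E] [NormedSpace ℝ E] [CompleteSpace E] [PartialOrder E]
    [CovariantClass E E (· + ·) (· ≤ ·)]
    [NormedAddCommGroup F] [NormedSpace ℝ F] [CompleteSpace F] [PartialOrder F]
    [CovariantClass F F (· + ·) (· ≤ ·)]
    [NormedAddCommGroup G] [NormedSpace ℝ G] [CompleteSpace G] [PartialOrder G]
    [CovariantClass G G (· + ·) (· ≤ ·)]
    (hE_smul : ∀ (c : ℝ) (z : E), 0 ≤ c → 0 ≤ z → 0 ≤ c • z)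
    (hE_gen : ∀ z : E, ∃ p q : E, 0 ≤ p ∧ 0 ≤ q ∧ z = p - q)
    (hE_norm : ∀ z w : E, 0 ≤ z → z ≤ w → ‖z‖ ≤ ‖w‖)
    (hF_smul : ∀ (c : ℝ) (z : F), 0 ≤ c → 0 ≤ z → 0 ≤ c • z)
    (hF_gen : ∀ z : F, ∃ p q : F, 0 ≤ p ∧ 0 ≤ q ∧ z = p - q)
    (hF_norm : ∀ z w : F, 0 ≤ z → z ≤ w → ‖z‖ ≤ ‖w‖)
    (hG_smul : ∀ (c : ℝ) (z : G), 0 ≤ c → 0 ≤ z → 0 ≤ c • z)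
    (hG_gen : ∀ z : G, ∃ p q : G, 0 ≤ p ∧ 0 ≤ q ∧ z = p - q)
    (hG_norm : ∀ z w : G, 0 ≤ z → z ≤ w → ‖z‖ ≤ ‖w‖)
    (Φ : E →L[ℝ] F →L[ℝ] G)
    (hΦ_pos : ∀ (z : E) (w : F), 0 ≤ z → 0 ≤ w → 0 ≤ Φ z w)
    (x : ℕ → E) (y : ℕ → F)
    (hx_pos : ∀ n, 1 ≤ n → 0 ≤ x n)
    (hx_anti : ∀ n, 1 ≤ n → x (n + 1) ≤ x n)
    (hx_norm : Tendsto (fun n => ‖x n‖) atTop (𝓝 0))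
    (hy_pos : ∀ n, 1 ≤ n → 0 ≤ y n)
    (hconv : ∃ S : G,
      Tendsto (fun n => ∑ k ∈ Finset.Icc 1 n, Φ (x k) (y k)) atTop (𝓝 S)) :
    Tendsto (fun n => Φ (x n) (∑ k ∈ Finset.Icc 1 n, y k)) atTop (𝓝 0) := by

  classical
  obtain ⟨S, hS⟩ := hconv
  have hx_le : ∀ k n : ℕ, 1 ≤ k → k ≤ n → x n ≤ x k := by
    intro k n hk hkn
    induction n with
    | zero => omega
    | succ n ih =>
      rcases Nat.lt_or_ge k (n+1) with h | h
      · exact le_trans (hx_anti n (by omega)) (ih (by omega))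
      · have hkn' : k = n + 1 := by omega
        rw [hkn']
  set Sf : ℕ → G := fun n => ∑ k ∈ Finset.Icc 1 n, Φ (x k) (y k) with hSf
  rw [Metric.tendsto_atTop]
  intro ε hε
  have hC : CauchySeq Sf := hS.cauchySeq
  rw [Metric.cauchySeq_iff] at hC
  obtain ⟨N0, hN0⟩ := hC (ε/2) (by linarith)
  set M := max N0 1 with hM
  have hM1 : 1 ≤ M := le_max_right _ _
  set T : F := ∑ k ∈ Finset.Icc 1 M, y k with hT
  have hδ : (0:ℝ) < ε/2 / (‖Φ‖ * ‖T‖ + 1) := by positivity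
  rw [Metric.tendsto_atTop] at hx_norm
  obtain ⟨N1, hN1⟩ := hx_norm _ hδ
  refine ⟨max N1 M, fun n hn => ?_⟩
  have hnM : M ≤ n := le_trans (le_max_right _ _) hn
  have hn1 : 1 ≤ n := le_trans hM1 hnM
  have hxn : ‖x n‖ < ε/2 / (‖Φ‖ * ‖T‖ + 1) := by
    have := hN1 n (le_trans (le_max_left _ _) hn)
    simpa [Real.dist_eq, abs_of_nonneg (norm_nonneg _)] using this
  have hIcc : ∀ m : ℕ, Finset.Icc 1 m = Finset.Ioc 0 m := fun m => Finset.Icc_add_one_left_eq_Ioc 0 m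
  -- split the sum of y
  have hsplitF : (∑ k ∈ Finset.Icc 1 n, y k) = T + ∑ k ∈ Finset.Ioc M n, y k := by
    rw [hT, hIcc, hIcc]
    exact (Finset.sum_Ioc_consecutive _ (Nat.zero_le M) hnM).symm
  have hsplitG : Sf n - Sf M = ∑ k ∈ Finset.Ioc M n, Φ (x k) (y k) := by
    rw [hSf]
    simp only
    rw [hIcc, hIcc, ← Finset.sum_Ioc_consecutive _ (Nat.zero_le M) hnM]
    abel
  set R : F := ∑ k ∈ Finset.Ioc M n, y k with hR
  have hR_nonneg : (0:F) ≤ R := by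
    refine aux_sum_nonneg' fun k hk => hy_pos k ?_
    have := (Finset.mem_Ioc.mp hk).1
    omega
  have hΦR_pos : 0 ≤ Φ (x n) R := hΦ_pos _ _ (hx_pos n hn1) hR_nonneg
  have hΦR_le : Φ (x n) R ≤ Sf n - Sf M := by
    rw [hsplitG, hR, map_sum]
    refine aux_sum_le' fun k hk => ?_
    have hk1 : 1 ≤ k := by have := (Finset.mem_Ioc.mp hk).1; omega
    have hkn : k ≤ n := (Finset.mem_Ioc.mp hk).2
    have hx' : (0:E) ≤ x k - x n := sub_nonneg.mpr (hx_le k n hk1 hkn)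
    have := hΦ_pos _ _ hx' (hy_pos k hk1)
    rw [map_sub, ContinuousLinearMap.sub_apply] at this
    exact sub_nonneg.mp this
  have hΦR_norm : ‖Φ (x n) R‖ ≤ ‖Sf n - Sf M‖ := hG_norm _ _ hΦR_pos hΦR_le
  have hdist : ‖Sf n - Sf M‖ < ε/2 := by
    have := hN0 n (le_trans (le_max_left _ _) hnM) M (le_max_left _ _)
    rwa [dist_eq_norm] at this
  have hT_bound : ‖Φ (x n) T‖ < ε/2 := by
    have h1 : ‖Φ (x n) T‖ ≤ ‖Φ‖ * ‖x n‖ * ‖T‖ := Φ.le_opNorm₂ (x n) T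
    have h2 : ‖Φ‖ * ‖x n‖ * ‖T‖ ≤ (‖Φ‖ * ‖T‖ + 1) * ‖x n‖ := by
      nlinarith [norm_nonneg (x n), norm_nonneg T, norm_nonneg Φ]
    have h3 : (‖Φ‖ * ‖T‖ + 1) * ‖x n‖ < ε/2 := by
      rw [mul_comm]
      exact (lt_div_iff₀ (by positivity)).mp hxn
    linarith
  rw [dist_eq_norm, sub_zero, hsplitF, map_add]
  calc ‖Φ (x n) T + Φ (x n) R‖ ≤ ‖Φ (x n) T‖ + ‖Φ (x n) R‖ := norm_add_le _ _
    _ < ε/2 + ε/2 := by have := lt_of_le_of_lt hΦR_norm hdist; linarith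
    _ = ε := by ring
end

section
/- Let E, F, G be ordered Banach spaces and let Φ : E × F → G be a continuous positive bilinear map. Let (xₙ)ₙ≥1 be a decreasing sequence of positive elements of E with ‖xₙ‖ → 0, and let (yₙ)ₙ≥1 be a sequence of positive elements of F. If the series ∑ₙ Φ(xₙ, yₙ) converges in G, then the series ∑ₙ Φ(xₙ − xₙ₊₁, ∑_{k=1}^{n} y_k) also converges in G and the two series have the same sum: ∑_{n=1}^{∞} Φ(xₙ, yₙ) = ∑_{n=1}^{∞} Φ(xₙ − xₙ₊₁, ∑_{k=1}^{n} y_k). -/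
open Filter Topology

private theorem my_sum_le_sum {ι G : Type*} [AddCommMonoid G] [PartialOrder G]
    [CovariantClass G G (· + ·) (· ≤ ·)] {s : Finset ι} {f g : ι → G}
    (h : ∀ i ∈ s, f i ≤ g i) : ∑ i ∈ s, f i ≤ ∑ i ∈ s, g i := by
  classical
  induction s using Finset.induction with
  | empty => simp
  | @insert a s ha ih =>
    rw [Finset.sum_insert ha, Finset.sum_insert ha]
    have h1 : f a ≤ g a := h a (Finset.mem_insert_self a s)
    have h2 : ∑ i ∈ s, f i ≤ ∑ i ∈ s, g i :=
      ih fun i hi => h i (Finset.mem_insert_of_mem hi)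
    calc f a + ∑ i ∈ s, f i ≤ f a + ∑ i ∈ s, g i := add_le_add_right h2 _
      _ ≤ g a + ∑ i ∈ s, g i := by
          rw [add_comm, add_comm (g a)]; exact add_le_add_right h1 _

private theorem my_sum_nonneg {ι G : Type*} [AddCommMonoid G] [PartialOrder G]
    [CovariantClass G G (· + ·) (· ≤ ·)] {s : Finset ι} {f : ι → G}
    (h : ∀ i ∈ s, 0 ≤ f i) : 0 ≤ ∑ i ∈ s, f i := by
  have := my_sum_le_sum (g := f) (s := s) (f := fun _ => (0 : G)) h
  simpa using this

/-- Abel partial summation for series in ordered Banach spaces (forward direction):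
if `∑ Φ(xₙ, yₙ)` converges with sum `S`, then `∑ Φ(xₙ − xₙ₊₁, ∑_{k=1}^n y_k)`
converges with the same sum `S`. -/
theorem abel_partial_summation_stmt2
    {E F G : Type*}
    [NormedAddCommGroup E] [NormedSpace ℝ E] [CompleteSpace E] [PartialOrder E]
    [CovariantClass E E (· + ·) (· ≤ ·)]
    [NormedAddCommGroup F] [NormedSpace ℝ F] [CompleteSpace F] [PartialOrder F]
    [CovariantClass F F (· + ·) (· ≤ ·)]
    [NormedAddCommGroup G] [NormedSpace ℝ G] [CompleteSpace G] [PartialOrder G]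
    [CovariantClass G G (· + ·) (· ≤ ·)]
    (hE_smul : ∀ (c : ℝ) (z : E), 0 ≤ c → 0 ≤ z → 0 ≤ c • z)
    (hE_gen : ∀ z : E, ∃ p q : E, 0 ≤ p ∧ 0 ≤ q ∧ z = p - q)
    (hE_norm : ∀ z w : E, 0 ≤ z → z ≤ w → ‖z‖ ≤ ‖w‖)
    (hF_smul : ∀ (c : ℝ) (z : F), 0 ≤ c → 0 ≤ z → 0 ≤ c • z)
    (hF_gen : ∀ z : F, ∃ p q : F, 0 ≤ p ∧ 0 ≤ q ∧ z = p - q)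
    (hF_norm : ∀ z w : F, 0 ≤ z → z ≤ w → ‖z‖ ≤ ‖w‖)
    (hG_smul : ∀ (c : ℝ) (z : G), 0 ≤ c → 0 ≤ z → 0 ≤ c • z)
    (hG_gen : ∀ z : G, ∃ p q : G, 0 ≤ p ∧ 0 ≤ q ∧ z = p - q)
    (hG_norm : ∀ z w : G, 0 ≤ z → z ≤ w → ‖z‖ ≤ ‖w‖)
    (Φ : E →L[ℝ] F →L[ℝ] G)
    (hΦ_pos : ∀ (z : E) (w : F), 0 ≤ z → 0 ≤ w → 0 ≤ Φ z w)
    (x : ℕ → E) (y : ℕ → F)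
    (hx_pos : ∀ n, 1 ≤ n → 0 ≤ x n)
    (hx_anti : ∀ n, 1 ≤ n → x (n + 1) ≤ x n)
    (hx_norm : Tendsto (fun n => ‖x n‖) atTop (𝓝 0))
    (hy_pos : ∀ n, 1 ≤ n → 0 ≤ y n)
    (S : G)
    (hS : Tendsto (fun n => ∑ k ∈ Finset.Icc 1 n, Φ (x k) (y k)) atTop (𝓝 S)) :
    Tendsto
      (fun n => ∑ m ∈ Finset.Icc 1 n, Φ (x m - x (m + 1)) (∑ k ∈ Finset.Icc 1 m, y k))
      atTop (𝓝 S) := by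
  haveI : CovariantClass G G (Function.swap (· + ·)) (· ≤ ·) :=
    ⟨fun a b c h => by simpa [add_comm] using add_le_add_left h a⟩
  set Y : ℕ → F := fun n => ∑ k ∈ Finset.Icc 1 n, y k with hY
  set Sn : ℕ → G := fun n => ∑ k ∈ Finset.Icc 1 n, Φ (x k) (y k) with hSn
  -- monotonicity of x on [1, ∞)
  have hxmono : ∀ k n, 1 ≤ k → k ≤ n → x n ≤ x k := by
    intro k n hk hkn
    induction n, hkn using Nat.le_induction with
    | base => exact le_refl _
    | succ n hn ih => exact le_trans (hx_anti n (le_trans hk hn)) ih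
  have hYpos : ∀ n, (0 : F) ≤ Y n := by
    intro n
    exact my_sum_nonneg fun k hk => hy_pos k (Finset.mem_Icc.mp hk).1
  -- Abel identity
  have key : ∀ n, ∑ m ∈ Finset.Icc 1 n, Φ (x m - x (m + 1)) (Y m)
      = Sn n - Φ (x (n + 1)) (Y n) := by
    intro n
    induction n with
    | zero => simp [hSn, hY]
    | succ n ih =>
      rw [Finset.sum_Icc_succ_top (by omega : 1 ≤ n + 1), ih]
      have hYs : Y (n + 1) = Y n + y (n + 1) := by
        simp [hY, Finset.sum_Icc_succ_top (by omega : 1 ≤ n + 1)]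
      have hSs : Sn (n + 1) = Sn n + Φ (x (n + 1)) (y (n + 1)) := by
        simp [hSn, Finset.sum_Icc_succ_top (by omega : 1 ≤ n + 1)]
      rw [hYs, hSs, map_sub, ContinuousLinearMap.sub_apply, map_add]
      abel
  -- the error term tends to 0
  have h0 : Tendsto (fun n => Φ (x (n + 1)) (Y n)) atTop (𝓝 (0 : G)) := by
    rw [Metric.tendsto_atTop]
    intro ε hε
    have hC : CauchySeq Sn := hS.cauchySeq
    rw [Metric.cauchySeq_iff'] at hC
    obtain ⟨M, hM⟩ := hC (ε / 2) (by linarith)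
    -- choose N with ‖Φ‖ * ‖x (n+1)‖ * ‖Y M‖ < ε/2 for n ≥ N
    have hx0 : Tendsto (fun n => ‖Φ‖ * ‖x (n + 1)‖ * ‖Y M‖) atTop (𝓝 0) := by
      have := (hx_norm.comp (tendsto_add_atTop_nat 1)).const_mul ‖Φ‖
      simpa [mul_comm, mul_assoc, Function.comp] using this.mul_const ‖Y M‖
    rw [Metric.tendsto_atTop] at hx0
    obtain ⟨N, hN⟩ := hx0 (ε / 2) (by linarith)
    refine ⟨max N M, fun n hn => ?_⟩
    have hnN : N ≤ n := le_trans (le_max_left _ _) hn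
    have hnM : M ≤ n := le_trans (le_max_right _ _) hn
    -- key inequality: Φ (x (n+1)) (Y n) ≤ Φ (x (n+1)) (Y M) + (Sn n - Sn M)
    have hIcc : ∀ j : ℕ, Finset.Icc 1 j = Finset.Ioc 0 j := by
      intro j; rw [← Finset.Icc_add_one_left_eq_Ioc]; rfl
    have hYdiff : Y n - Y M = ∑ k ∈ Finset.Ioc M n, y k := by
      have := Finset.sum_Ioc_consecutive y (Nat.zero_le M) hnM
      simp only [hY, hIcc]
      rw [← this]; abel
    have hSdiff : Sn n - Sn M = ∑ k ∈ Finset.Ioc M n, Φ (x k) (y k) := by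
      have := Finset.sum_Ioc_consecutive (fun k => Φ (x k) (y k)) (Nat.zero_le M) hnM
      simp only [hSn, hIcc]
      rw [← this]; abel
    have hineq : Φ (x (n + 1)) (Y n) ≤ Φ (x (n + 1)) (Y M) + (Sn n - Sn M) := by
      rw [← sub_le_iff_le_add']
      rw [← map_sub, hYdiff, hSdiff, map_sum]
      refine my_sum_le_sum fun k hk => ?_
      obtain ⟨hk1, hk2⟩ := Finset.mem_Ioc.mp hk
      have hk1' : 1 ≤ k := Nat.one_le_iff_ne_zero.mpr (by omega)
      have hxk : x (n + 1) ≤ x k := hxmono k (n + 1) hk1' (by omega)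
      have := hΦ_pos (x k - x (n + 1)) (y k) (sub_nonneg.mpr hxk) (hy_pos k hk1')
      rw [map_sub, ContinuousLinearMap.sub_apply] at this
      exact sub_nonneg.mp this
    have hpos : (0 : G) ≤ Φ (x (n + 1)) (Y n) :=
      hΦ_pos _ _ (hx_pos (n + 1) (by omega)) (hYpos n)
    have hnorm : ‖Φ (x (n + 1)) (Y n)‖ ≤ ‖Φ (x (n + 1)) (Y M) + (Sn n - Sn M)‖ :=
      hG_norm _ _ hpos hineq
    have hb1 : ‖Φ (x (n + 1)) (Y M)‖ ≤ ‖Φ‖ * ‖x (n + 1)‖ * ‖Y M‖ :=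
      Φ.le_opNorm₂ (x (n + 1)) (Y M)
    have hb2 : ‖Sn n - Sn M‖ < ε / 2 := by
      have := hM n hnM
      rwa [dist_eq_norm] at this
    have hb3 : ‖Φ‖ * ‖x (n + 1)‖ * ‖Y M‖ < ε / 2 := by
      have := hN n hnN
      rw [Real.dist_eq, sub_zero] at this
      calc ‖Φ‖ * ‖x (n + 1)‖ * ‖Y M‖ ≤ |‖Φ‖ * ‖x (n + 1)‖ * ‖Y M‖| := le_abs_self _
        _ < ε / 2 := this
    rw [dist_eq_norm, sub_zero]
    calc ‖Φ (x (n + 1)) (Y n)‖ ≤ ‖Φ (x (n + 1)) (Y M) + (Sn n - Sn M)‖ := hnorm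
      _ ≤ ‖Φ (x (n + 1)) (Y M)‖ + ‖Sn n - Sn M‖ := norm_add_le _ _
      _ ≤ ‖Φ‖ * ‖x (n + 1)‖ * ‖Y M‖ + ‖Sn n - Sn M‖ := by linarith
      _ < ε := by linarith
  have : Tendsto (fun n => Sn n - Φ (x (n + 1)) (Y n)) atTop (𝓝 (S - 0)) :=
    hS.sub h0
  rw [sub_zero] at this
  exact this.congr fun n => (key n).symm
end

section
/- Let E, F, G be ordered Banach spaces and let Φ : E × F → G be a continuous positive bilinear map. Let (xₙ)ₙ≥1 be a decreasing sequence of positive elements of E with ‖xₙ‖ → 0, and let (yₙ)ₙ≥1 be a sequence of positive elements of F. If the series ∑ₙ Φ(xₙ − xₙ₊₁, ∑_{k=1}^{n} y_k) converges in G, then the series ∑ₙ Φ(xₙ, yₙ) also converges in G and the two series have the same sum. -/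
open Filter Topology

/-- Abel partial summation for series in ordered Banach spaces (converse direction):
if `∑ Φ(xₙ − xₙ₊₁, ∑_{k=1}^n y_k)` converges with sum `S`, then `∑ Φ(xₙ, yₙ)`
converges with the same sum `S`. -/
theorem abel_partial_summation_stmt3
    {E F G : Type*}
    [NormedAddCommGroup E] [NormedSpace ℝ E] [CompleteSpace E] [PartialOrder E]
    [CovariantClass E E (· + ·) (· ≤ ·)]
    [NormedAddCommGroup F] [NormedSpace ℝ F] [CompleteSpace F] [PartialOrder F]
    [CovariantClass F F (· + ·) (· ≤ ·)]
    [NormedAddCommGroup G] [NormedSpace ℝ G] [CompleteSpace G] [PartialOrder G]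
    [CovariantClass G G (· + ·) (· ≤ ·)]
    (hE_smul : ∀ (c : ℝ) (z : E), 0 ≤ c → 0 ≤ z → 0 ≤ c • z)
    (hE_gen : ∀ z : E, ∃ p q : E, 0 ≤ p ∧ 0 ≤ q ∧ z = p - q)
    (hE_norm : ∀ z w : E, 0 ≤ z → z ≤ w → ‖z‖ ≤ ‖w‖)
    (hF_smul : ∀ (c : ℝ) (z : F), 0 ≤ c → 0 ≤ z → 0 ≤ c • z)
    (hF_gen : ∀ z : F, ∃ p q : F, 0 ≤ p ∧ 0 ≤ q ∧ z = p - q)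
    (hF_norm : ∀ z w : F, 0 ≤ z → z ≤ w → ‖z‖ ≤ ‖w‖)
    (hG_smul : ∀ (c : ℝ) (z : G), 0 ≤ c → 0 ≤ z → 0 ≤ c • z)
    (hG_gen : ∀ z : G, ∃ p q : G, 0 ≤ p ∧ 0 ≤ q ∧ z = p - q)
    (hG_norm : ∀ z w : G, 0 ≤ z → z ≤ w → ‖z‖ ≤ ‖w‖)
    (Φ : E →L[ℝ] F →L[ℝ] G)
    (hΦ_pos : ∀ (z : E) (w : F), 0 ≤ z → 0 ≤ w → 0 ≤ Φ z w)
    (x : ℕ → E) (y : ℕ → F)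
    (hx_pos : ∀ n, 1 ≤ n → 0 ≤ x n)
    (hx_anti : ∀ n, 1 ≤ n → x (n + 1) ≤ x n)
    (hx_norm : Tendsto (fun n => ‖x n‖) atTop (𝓝 0))
    (hy_pos : ∀ n, 1 ≤ n → 0 ≤ y n)
    (S : G)
    (hS : Tendsto
      (fun n => ∑ m ∈ Finset.Icc 1 n, Φ (x m - x (m + 1)) (∑ k ∈ Finset.Icc 1 m, y k))
      atTop (𝓝 S)) :
    Tendsto (fun n => ∑ k ∈ Finset.Icc 1 n, Φ (x k) (y k)) atTop (𝓝 S) := by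
  haveI : IsOrderedAddMonoid F :=
    { add_le_add_left := fun a b h c => add_le_add_left h c }
  haveI : IsOrderedAddMonoid G :=
    { add_le_add_left := fun a b h c => add_le_add_left h c }
  set Y : ℕ → F := fun n => ∑ k ∈ Finset.Icc 1 n, y k with hYdef
  set T : ℕ → G := fun n => ∑ m ∈ Finset.Icc 1 n, Φ (x m - x (m + 1)) (Y m) with hTdef
  have hY_pos : ∀ n, 0 ≤ Y n := fun n =>
    Finset.sum_nonneg fun k hk => hy_pos k (Finset.mem_Icc.mp hk).1
  have hIoc : ∀ m : ℕ, Finset.Icc 1 m = Finset.Ioc 0 m := fun m => by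
    rw [← Finset.Icc_add_one_left_eq_Ioc, zero_add]
  have hY_le : ∀ N n, N ≤ n → Y N ≤ Y n := by
    intro N n hNn
    have : Y N + ∑ k ∈ Finset.Ioc N n, y k = Y n := by
      simp only [hYdef, hIoc]
      exact Finset.sum_Ioc_consecutive _ (Nat.zero_le N) hNn
    rw [← this]
    exact le_add_of_nonneg_right (Finset.sum_nonneg fun k hk =>
      hy_pos k (Nat.one_le_iff_ne_zero.mpr (by
        have := (Finset.mem_Ioc.mp hk).1; omega)))
  -- Abel identity
  have hAT : ∀ n, ∑ k ∈ Finset.Icc 1 n, Φ (x k) (y k) = T n + Φ (x (n + 1)) (Y n) := by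
    intro n
    induction n with
    | zero => simp [hTdef, hYdef]
    | succ n ih =>
      have h1 : (1 : ℕ) ≤ n + 1 := by omega
      rw [Finset.sum_Icc_succ_top h1, ih]
      have hT : T (n + 1) = T n + Φ (x (n + 1) - x (n + 2)) (Y (n + 1)) := by
        simp only [hTdef]
        exact Finset.sum_Icc_succ_top h1 _
      have hY : Y (n + 1) = Y n + y (n + 1) := by
        simp only [hYdef]
        exact Finset.sum_Icc_succ_top h1 _
      rw [hT, hY]
      simp only [map_sub, map_add, ContinuousLinearMap.sub_apply]
      abel
  -- lower-bound accumulation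
  have hRb : ∀ N n, 1 ≤ N → N ≤ n →
      Φ (x (N + 1)) (Y N) ≤ T n - T N + Φ (x (n + 1)) (Y N) := by
    intro N n hN1 hNn
    induction n, hNn using Nat.le_induction with
    | base => simp
    | succ n hNn ih =>
      have h1 : (1 : ℕ) ≤ n + 1 := by omega
      have hT : T (n + 1) = T n + Φ (x (n + 1) - x (n + 2)) (Y (n + 1)) := by
        simp only [hTdef]
        exact Finset.sum_Icc_succ_top h1 _
      have hd : 0 ≤ x (n + 1) - x (n + 2) := sub_nonneg.mpr (hx_anti (n + 1) h1)
      have hpos : 0 ≤ Φ (x (n + 1) - x (n + 2)) (Y (n + 1) - Y N) :=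
        hΦ_pos _ _ hd (sub_nonneg.mpr (hY_le N (n + 1) (by omega)))
      have hkey : T (n + 1) - T N + Φ (x (n + 2)) (Y N)
          = (T n - T N + Φ (x (n + 1)) (Y N))
            + Φ (x (n + 1) - x (n + 2)) (Y (n + 1) - Y N) := by
        rw [hT]
        simp only [map_sub, ContinuousLinearMap.sub_apply]
        abel
      rw [hkey]
      exact ih.trans (le_add_of_nonneg_right hpos)
  -- R tends to zero
  have hx0 : Tendsto x atTop (𝓝 0) := by
    rw [tendsto_zero_iff_norm_tendsto_zero]; exact hx_norm
  have hR0 : Tendsto (fun n => Φ (x (n + 1)) (Y n)) atTop (𝓝 0) := by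
    rw [NormedAddCommGroup.tendsto_nhds_zero]
    intro ε hε
    have hTS : ∀ᶠ N in atTop, ‖T N - S‖ < ε / 2 := by
      have := hS.eventually (Metric.ball_mem_nhds S (half_pos hε))
      filter_upwards [this] with N hN
      rwa [dist_eq_norm] at hN
    filter_upwards [hTS, eventually_ge_atTop 1] with N hNS hN1
    have hRpos : 0 ≤ Φ (x (N + 1)) (Y N) :=
      hΦ_pos _ _ (hx_pos (N + 1) (by omega)) (hY_pos N)
    -- limit of the bound
    have hTn : Tendsto (fun n => ‖T n - S‖) atTop (𝓝 0) :=
      tendsto_iff_norm_sub_tendsto_zero.mp hS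
    have hxn : Tendsto (fun n : ℕ => ‖(Φ (x (n + 1))) (Y N)‖) atTop (𝓝 0) := by
      have h1 : Tendsto (fun n : ℕ => x (n + 1)) atTop (𝓝 0) :=
        hx0.comp (tendsto_add_atTop_nat 1)
      have h2 : Tendsto (fun n : ℕ => (Φ.flip (Y N)) (x (n + 1))) atTop (𝓝 0) := by
        have := ((Φ.flip (Y N)).continuous.tendsto 0).comp h1
        simpa [Function.comp_def] using this
      have h3 : ∀ n : ℕ, (Φ.flip (Y N)) (x (n + 1)) = (Φ (x (n + 1))) (Y N) := fun n => rfl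
      simp only [h3] at h2
      simpa using h2.norm
    have hlim : Tendsto
        (fun n => ‖T n - S‖ + ‖T N - S‖ + ‖(Φ (x (n + 1))) (Y N)‖) atTop
        (𝓝 (0 + ‖T N - S‖ + 0)) :=
      (hTn.add tendsto_const_nhds).add hxn
    have hbound : ‖Φ (x (N + 1)) (Y N)‖ ≤ 0 + ‖T N - S‖ + 0 := by
      apply ge_of_tendsto hlim
      filter_upwards [eventually_ge_atTop N] with n hn
      have h1 := hRb N n hN1 hn
      have h2 := hG_norm _ _ hRpos h1
      refine h2.trans ?_
      have : T n - T N + (Φ (x (n + 1))) (Y N)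
          = (T n - S) + (S - T N) + (Φ (x (n + 1))) (Y N) := by abel
      rw [this]
      calc ‖(T n - S) + (S - T N) + (Φ (x (n + 1))) (Y N)‖
          ≤ ‖T n - S‖ + ‖S - T N‖ + ‖(Φ (x (n + 1))) (Y N)‖ := norm_add₃_le
        _ = ‖T n - S‖ + ‖T N - S‖ + ‖(Φ (x (n + 1))) (Y N)‖ := by rw [norm_sub_rev S]
    rw [zero_add, add_zero] at hbound
    calc ‖Φ (x (N + 1)) (Y N)‖ ≤ ‖T N - S‖ := hbound
      _ < ε / 2 := hNS
      _ < ε := by linarith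
  have := hS.add hR0
  rw [add_zero] at this
  exact this.congr fun n => (hAT n).symm
end

section
/- Let E be an ordered Banach space with a strong order unit u > 0 whose norm is associated to u. Let (xₙ)ₙ≥1 be a sequence of positive elements of E such that (1/n)·∑_{k=1}^{n} x_k → 0 in norm. Then for every ε > 0 the set A_ε = {n ∈ ℕ : ε·u ≤ xₙ} has zero density. -/
open Filter Topology

/-- Koopman–von Neumann type theorem in ordered Banach spaces with a strong order unit:
if `(1/n) ∑_{k=1}^n x_k → 0` in norm for a sequence of positive elements, then for every
`ε > 0` the set `A_ε = {n : ε·u ≤ xₙ}` has zero density. -/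
theorem abel_partial_summation_stmt7
    {E : Type*}
    [NormedAddCommGroup E] [NormedSpace ℝ E] [CompleteSpace E] [PartialOrder E]
    [CovariantClass E E (· + ·) (· ≤ ·)]
    (hE_smul : ∀ (c : ℝ) (z : E), 0 ≤ c → 0 ≤ z → 0 ≤ c • z)
    (hE_gen : ∀ z : E, ∃ p q : E, 0 ≤ p ∧ 0 ≤ q ∧ z = p - q)
    (u : E) (hu : 0 < u)
    -- the norm of `E` is the one associated to the strong order unit `u`
    (h_unit : ∀ (z : E) (l : ℝ), 0 ≤ l → (‖z‖ ≤ l ↔ -(l • u) ≤ z ∧ z ≤ l • u))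
    (x : ℕ → E)
    (hx_pos : ∀ n, 1 ≤ n → 0 ≤ x n)
    (hcesaro :
      Tendsto (fun n : ℕ => (n : ℝ)⁻¹ • ∑ k ∈ Finset.Icc 1 n, x k) atTop (𝓝 0)) :
    ∀ ε : ℝ, 0 < ε →
      Tendsto
        (fun n : ℕ => (({k : ℕ | ε • u ≤ x k} ∩ Set.Icc 1 n).ncard : ℝ) / n)
        atTop (𝓝 0) := by
  intro ε hε
  classical
  haveI : IsOrderedAddMonoid E :=
    { add_le_add_left := fun a b h c => by
        rw [add_comm a, add_comm b]; exact CovariantClass.elim c h }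
  -- monotonicity of scalar multiplication by nonnegative reals
  have hsmul_mono : ∀ (c : ℝ) (a b : E), 0 ≤ c → a ≤ b → c • a ≤ c • b := by
    intro c a b hc hab
    have h := hE_smul c (b - a) hc (by rwa [sub_nonneg])
    rw [smul_sub] at h
    exact sub_nonneg.mp h
  -- lower bound on the norm from the order unit
  have hlow : ∀ (y : E) (l : ℝ), 0 ≤ l → l • u ≤ y → l ≤ ‖y‖ := by
    intro y l hl hle
    by_contra h
    push_neg at h
    have hy := ((h_unit y ‖y‖ (norm_nonneg y)).mp le_rfl).2
    have h1 : l • u ≤ ‖y‖ • u := hle.trans hy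
    have h2 : (0 : E) ≤ (l - ‖y‖) • u := hE_smul _ _ (by linarith) hu.le
    have h3 : (l - ‖y‖) • u ≤ 0 := by
      rw [sub_smul]; exact sub_nonpos.mpr h1
    have heq : (l - ‖y‖) • u = 0 := le_antisymm h3 h2
    have hne : (l - ‖y‖) ≠ 0 := by linarith
    have : u = 0 := by
      have := congrArg (fun z => (l - ‖y‖)⁻¹ • z) heq
      simpa [smul_smul, inv_mul_cancel₀ hne] using this
    exact hu.ne' this
  have hg : Tendsto (fun n : ℕ =>
      ‖(n : ℝ)⁻¹ • ∑ k ∈ Finset.Icc 1 n, x k‖ / ε) atTop (𝓝 0) := by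
    have := (hcesaro.norm).div_const ε
    simpa using this
  apply squeeze_zero (fun n => div_nonneg (Nat.cast_nonneg _) (Nat.cast_nonneg _)) _ hg
  intro n
  rcases Nat.eq_zero_or_pos n with hn | hn
  · subst hn
    simp [div_nonneg, norm_nonneg, hε.le]
  · set T : Finset ℕ := (Finset.Icc 1 n).filter (fun k => ε • u ≤ x k) with hT
    have hcardeq : ({k : ℕ | ε • u ≤ x k} ∩ Set.Icc 1 n).ncard = T.card := by
      rw [show ({k : ℕ | ε • u ≤ x k} ∩ Set.Icc 1 n) = (T : Set ℕ) by
        ext k; simp [hT, Finset.mem_filter, Set.mem_Icc, and_comm]]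
      exact Set.ncard_coe_finset T
    set S : E := ∑ k ∈ Finset.Icc 1 n, x k with hS
    have hsum1 : ((T.card : ℝ) * ε) • u ≤ ∑ k ∈ T, x k := by
      have h1 : ∑ _k ∈ T, ε • u ≤ ∑ k ∈ T, x k :=
        Finset.sum_le_sum (fun k hk => (Finset.mem_filter.mp hk).2)
      have h2 : ∑ _k ∈ T, ε • u = ((T.card : ℝ) * ε) • u := by
        rw [Finset.sum_const, mul_smul, Nat.cast_smul_eq_nsmul]
      rwa [h2] at h1
    have hsum2 : ∑ k ∈ T, x k ≤ S := by
      apply Finset.sum_le_sum_of_subset_of_nonneg (Finset.filter_subset _ _)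
      intro k hk _
      exact hx_pos k (Finset.mem_Icc.mp hk).1
    have hkey : ((T.card : ℝ) * ε / n) • u ≤ (n : ℝ)⁻¹ • S := by
      have h := hsmul_mono ((n : ℝ)⁻¹) _ _ (inv_nonneg.mpr (Nat.cast_nonneg n))
        (hsum1.trans hsum2)
      rw [smul_smul] at h
      rw [div_eq_inv_mul]
      exact h
    have hnpos : (0 : ℝ) < n := by exact_mod_cast hn
    have hlb : (T.card : ℝ) * ε / n ≤ ‖(n : ℝ)⁻¹ • S‖ :=
      hlow _ _ (by positivity) hkey
    rw [hcardeq, div_le_div_iff₀ hnpos hε]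
    rw [div_le_iff₀ hnpos] at hlb
    linarith
end

section
/- Let E be an ordered Banach space with a strong order unit u > 0 whose norm is associated to u, and let (xₙ)ₙ≥1 be a sequence of positive elements of E such that the series ∑ₙ xₙ converges. Then for every ε > 0 the set {n ∈ ℕ : ε·u ≤ n·xₙ} has zero density (i.e., the sequence (n·xₙ)ₙ converges in density to 0). -/
open Filter Topology

private lemma aux_sum_le_sum {E : Type*} [AddCommMonoid E] [PartialOrder E]
    [CovariantClass E E (· + ·) (· ≤ ·)] (s : Finset ℕ) (f g : ℕ → E)
    (h : ∀ i ∈ s, f i ≤ g i) : ∑ i ∈ s, f i ≤ ∑ i ∈ s, g i := by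
  classical
  induction s using Finset.cons_induction with
  | empty => simp
  | cons a s ha ih =>
    rw [Finset.sum_cons, Finset.sum_cons]
    have h1 := h a (Finset.mem_cons_self a s)
    have h2 := ih (fun i hi => h i (Finset.mem_cons_of_mem hi))
    calc f a + ∑ i ∈ s, f i ≤ f a + ∑ i ∈ s, g i := add_le_add_right h2 _
      _ = (∑ i ∈ s, g i) + f a := add_comm _ _
      _ ≤ (∑ i ∈ s, g i) + g a := add_le_add_right h1 _
      _ = g a + ∑ i ∈ s, g i := add_comm _ _

/-- If `∑ xₙ` is a convergent series of positive elements in an ordered Banach space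
whose norm is associated to a strong order unit `u`, then `(n·xₙ)` converges in density
to `0`: for every `ε > 0` the set `{n : ε·u ≤ n·xₙ}` has zero density. -/
theorem abel_partial_summation_stmt9
    {E : Type*}
    [NormedAddCommGroup E] [NormedSpace ℝ E] [CompleteSpace E] [PartialOrder E]
    [CovariantClass E E (· + ·) (· ≤ ·)]
    (hE_smul : ∀ (c : ℝ) (z : E), 0 ≤ c → 0 ≤ z → 0 ≤ c • z)
    (hE_gen : ∀ z : E, ∃ p q : E, 0 ≤ p ∧ 0 ≤ q ∧ z = p - q)
    (u : E) (hu : 0 < u)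
    -- the norm of `E` is the one associated to the strong order unit `u`
    (h_unit : ∀ (z : E) (l : ℝ), 0 ≤ l → (‖z‖ ≤ l ↔ -(l • u) ≤ z ∧ z ≤ l • u))
    (x : ℕ → E)
    (hx_pos : ∀ n, 1 ≤ n → 0 ≤ x n)
    (hconv : ∃ S : E, Tendsto (fun n => ∑ k ∈ Finset.Icc 1 n, x k) atTop (𝓝 S)) :
    ∀ ε : ℝ, 0 < ε →
      Tendsto
        (fun n : ℕ => (({k : ℕ | ε • u ≤ k • x k} ∩ Set.Icc 1 n).ncard : ℝ) / n)
        atTop (𝓝 0) := by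
  intro ε hε
  classical
  have hsmul_le : ∀ (c : ℝ) (a b : E), 0 ≤ c → a ≤ b → c • a ≤ c • b := by
    intro c a b hc hab
    have h := hE_smul c (b - a) hc (by simpa using sub_nonneg.mpr hab)
    rw [smul_sub] at h
    exact sub_nonneg.mp h
  have hcmp : ∀ a b : ℝ, a • u ≤ b • u → a ≤ b := by
    intro a b hab
    by_contra h
    push_neg at h
    have h1 : (0:E) ≤ (b - a) • u := by
      have := sub_nonneg.mpr hab
      rwa [← sub_smul] at this
    have h2 : (0:E) ≤ ((a - b)⁻¹) • ((b - a) • u) :=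
      hE_smul _ _ (inv_nonneg.mpr (by linarith)) h1
    rw [smul_smul] at h2
    have h3 : (a - b)⁻¹ * (b - a) = -1 := by
      have hab' : a - b ≠ 0 := by linarith
      field_simp
      ring
    rw [h3, neg_one_smul] at h2
    exact absurd (neg_nonneg.mp h2) hu.not_ge
  set P : ℕ → Prop := fun k => ε • u ≤ k • x k with hPdef
  have hset : ∀ n : ℕ, ({k : ℕ | P k} ∩ Set.Icc 1 n).ncard
      = ((Finset.Icc 1 n).filter P).card := by
    intro n
    rw [← Set.ncard_coe_finset]
    congr 1
    ext k
    simp [Set.mem_Icc, and_comm]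
  obtain ⟨S, hS⟩ := hconv
  have hcauchy := hS.cauchySeq
  rw [Metric.cauchySeq_iff'] at hcauchy
  rw [Metric.tendsto_atTop]
  intro δ hδ
  obtain ⟨m, hm⟩ := hcauchy (ε * δ / 4) (by positivity)
  -- key estimate for the tail
  have key : ∀ n : ℕ, m ≤ n → 1 ≤ n →
      (((Finset.Ioc m n).filter P).card : ℝ) / n ≤ δ / 4 := by
    intro n hmn hn1
    set T := (Finset.Ioc m n).filter P with hT
    have hn0 : (0:ℝ) < n := by exact_mod_cast hn1
    have hmem : ∀ k ∈ T, (ε / n) • u ≤ x k := by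
      intro k hk
      rw [hT, Finset.mem_filter, Finset.mem_Ioc] at hk
      obtain ⟨⟨hk1, hk2⟩, hkP⟩ := hk
      have hk0 : (0:ℝ) < k := by
        have : 0 < k := by omega
        exact_mod_cast this
      have hkP' : ε • u ≤ (k:ℝ) • x k := by
        rwa [Nat.cast_smul_eq_nsmul]
      have h1 : ((k:ℝ)⁻¹) • (ε • u) ≤ ((k:ℝ)⁻¹) • ((k:ℝ) • x k) :=
        hsmul_le _ _ _ (inv_nonneg.mpr hk0.le) hkP'
      rw [smul_smul, smul_smul, inv_mul_cancel₀ hk0.ne', one_smul] at h1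
      have h2 : (ε / n) • u ≤ ((k:ℝ)⁻¹ * ε) • u := by
        have hle : ε / (n:ℝ) ≤ (k:ℝ)⁻¹ * ε := by
          rw [inv_mul_eq_div, div_le_div_iff₀ hn0 hk0]
          have hkn : (k:ℝ) ≤ n := by exact_mod_cast hk2
          nlinarith
        have := hE_smul ((k:ℝ)⁻¹ * ε - ε / n) u (by linarith) hu.le
        rw [sub_smul] at this
        exact sub_nonneg.mp this
      exact h2.trans h1
    have hlow : ((T.card : ℝ) * (ε / n)) • u ≤ ∑ k ∈ T, x k := by
      have := aux_sum_le_sum T (fun _ => (ε / n) • u) x hmem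
      rwa [Finset.sum_const, ← Nat.cast_smul_eq_nsmul ℝ, smul_smul] at this
    have hsub : ∑ k ∈ T, x k ≤ ∑ k ∈ Finset.Ioc m n, x k := by
      rw [← Finset.sum_filter_add_sum_filter_not (Finset.Ioc m n) P x]
      have h0 : (0:E) ≤ ∑ k ∈ (Finset.Ioc m n).filter (fun k => ¬ P k), x k := by
        have := aux_sum_le_sum ((Finset.Ioc m n).filter (fun k => ¬ P k))
          (fun _ => (0:E)) x (by
            intro i hi
            rw [Finset.mem_filter, Finset.mem_Ioc] at hi
            exact hx_pos i (by omega))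
        simpa using this
      exact le_add_of_nonneg_right h0
    have htail : ∑ k ∈ Finset.Ioc m n, x k ≤ (ε * δ / 4) • u := by
      have hdist := hm n hmn
      have heq : (∑ k ∈ Finset.Icc 1 n, x k) - ∑ k ∈ Finset.Icc 1 m, x k
          = ∑ k ∈ Finset.Ioc m n, x k := by
        have hIoc := Finset.sum_Ioc_consecutive x (Nat.zero_le m) hmn
        have h01 : ∀ p : ℕ, Finset.Icc 1 p = Finset.Ioc 0 p := by
          intro p; ext k; simp [Finset.mem_Icc, Finset.mem_Ioc]; omega
        rw [h01 n, h01 m, ← hIoc]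
        abel
      rw [dist_eq_norm, heq] at hdist
      exact ((h_unit _ _ (by positivity)).mp hdist.le).2
    have hfinal : (T.card : ℝ) * (ε / n) ≤ ε * δ / 4 :=
      hcmp _ _ (hlow.trans (hsub.trans htail))
    have : ε * ((T.card : ℝ) / n) ≤ ε * (δ / 4) := by
      calc ε * ((T.card : ℝ) / n) = (T.card : ℝ) * (ε / n) := by ring
        _ ≤ ε * δ / 4 := hfinal
        _ = ε * (δ / 4) := by ring
    exact le_of_mul_le_mul_left this hε
  -- assemble
  obtain ⟨N₀, hN₀⟩ := exists_nat_gt (4 * m / δ)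
  refine ⟨max (max m 1) (N₀ + 1), fun n hn => ?_⟩
  have hnm : m ≤ n := le_trans (le_trans (le_max_left _ _) (le_max_left _ _)) hn
  have hn1 : 1 ≤ n := le_trans (le_trans (le_max_right _ _) (le_max_left _ _)) hn
  have hnN : N₀ + 1 ≤ n := le_trans (le_max_right _ _) hn
  have hn0 : (0:ℝ) < n := by exact_mod_cast hn1
  have hcard : ((Finset.Icc 1 n).filter P).card
      ≤ m + ((Finset.Ioc m n).filter P).card := by
    have hsub : (Finset.Icc 1 n).filter P
        ⊆ ((Finset.Icc 1 m).filter P) ∪ ((Finset.Ioc m n).filter P) := by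
      intro k hk
      rw [Finset.mem_filter, Finset.mem_Icc] at hk
      rw [Finset.mem_union, Finset.mem_filter, Finset.mem_filter,
        Finset.mem_Icc, Finset.mem_Ioc]
      rcases le_or_gt k m with h | h
      · exact Or.inl ⟨⟨hk.1.1, h⟩, hk.2⟩
      · exact Or.inr ⟨⟨h, hk.1.2⟩, hk.2⟩
    calc ((Finset.Icc 1 n).filter P).card
        ≤ (((Finset.Icc 1 m).filter P) ∪ ((Finset.Ioc m n).filter P)).card :=
          Finset.card_le_card hsub
      _ ≤ ((Finset.Icc 1 m).filter P).card + ((Finset.Ioc m n).filter P).card :=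
          Finset.card_union_le _ _
      _ ≤ m + ((Finset.Ioc m n).filter P).card := by
          have := (Finset.card_filter_le (Finset.Icc 1 m) P).trans
            (le_of_eq (Nat.card_Icc 1 m))
          omega
  have hTbound := key n hnm hn1
  have hmn4 : (m:ℝ) / n < δ / 4 := by
    have hN : (4 * m / δ : ℝ) < n := by
      have : (N₀ : ℝ) < n := by exact_mod_cast Nat.lt_of_succ_le hnN
      linarith
    rw [div_lt_iff₀ hn0]
    rw [div_lt_iff₀ hδ] at hN
    nlinarith
  have hle : (({k : ℕ | P k} ∩ Set.Icc 1 n).ncard : ℝ) / n < δ := by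
    rw [hset n]
    have h1 : (((Finset.Icc 1 n).filter P).card : ℝ) / n
        ≤ ((m : ℝ) + ((Finset.Ioc m n).filter P).card) / n := by
      gcongr
      exact_mod_cast hcard
    calc (((Finset.Icc 1 n).filter P).card : ℝ) / n
        ≤ ((m : ℝ) + ((Finset.Ioc m n).filter P).card) / n := h1
      _ = (m:ℝ)/n + (((Finset.Ioc m n).filter P).card : ℝ)/n := by ring
      _ < δ/4 + δ/4 := by linarith
      _ < δ := by linarith
  have hnonneg : 0 ≤ (({k : ℕ | P k} ∩ Set.Icc 1 n).ncard : ℝ) / n := by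
    positivity
  rw [Real.dist_eq, sub_zero, abs_of_nonneg hnonneg]
  exact hle
end

section
/- (Jensen–Steffensen inequality) Let x₁, …, xₙ be a monotone family of points in an interval [a, b] (i.e., x₁ ≤ x₂ ≤ ⋯ ≤ xₙ or x₁ ≥ x₂ ≥ ⋯ ≥ xₙ), and let w₁, …, wₙ be real weights such that ∑_{k=1}^{n} w_k = 1 and 0 ≤ ∑_{k=1}^{m} w_k ≤ 1 for every m ∈ {1, …, n}. Then ∑_{k=1}^{n} w_k x_k ∈ [a, b] and every convex function f : [a, b] → ℝ satisfies f(∑_{k=1}^{n} w_k x_k) ≤ ∑_{k=1}^{n} w_k f(x_k). -/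
/-- Forward Abel inequality: if all forward partial sums of `w` are nonnegative and
`c` is nonincreasing on `[1, m]`, then `(∑_{1}^{m} w) * c m ≤ ∑_{1}^{m} w k * c k`. -/
private lemma abelL (w c : ℕ → ℝ) :
    ∀ m : ℕ, 1 ≤ m →
      (∀ k, 1 ≤ k → k ≤ m → 0 ≤ ∑ j ∈ Finset.Icc 1 k, w j) →
      (∀ k, 1 ≤ k → k < m → c (k + 1) ≤ c k) →
      (∑ j ∈ Finset.Icc 1 m, w j) * c m ≤ ∑ k ∈ Finset.Icc 1 m, w k * c k := by
  intro m
  induction m with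
  | zero => omega
  | succ m ih =>
    intro _ hS hc
    rcases Nat.eq_zero_or_pos m with rfl | hm
    · simp
    · rw [Finset.sum_Icc_succ_top (by omega : 1 ≤ m + 1) w,
        Finset.sum_Icc_succ_top (by omega : 1 ≤ m + 1) (fun k => w k * c k)]
      have hIH := ih hm (fun k hk1 hk2 => hS k hk1 (by omega))
        (fun k hk1 hk2 => hc k hk1 (by omega))
      have hS' : 0 ≤ ∑ j ∈ Finset.Icc 1 m, w j := hS m hm (by omega)
      have hcm : c (m + 1) ≤ c m := hc m hm (by omega)
      nlinarith [mul_le_mul_of_nonneg_left hcm hS']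

/-- Backward Abel inequality: if all backward partial sums of `w` are nonnegative and
`c` is nondecreasing on `[j, n]`, then `(∑_{j}^{n} w) * c j ≤ ∑_{j}^{n} w k * c k`. -/
private lemma abelR (w c : ℕ → ℝ) (n : ℕ) :
    ∀ d j : ℕ, j + d = n → 1 ≤ j →
      (∀ k, j ≤ k → k ≤ n → 0 ≤ ∑ i ∈ Finset.Icc k n, w i) →
      (∀ k, j ≤ k → k < n → c k ≤ c (k + 1)) →
      (∑ i ∈ Finset.Icc j n, w i) * c j ≤ ∑ k ∈ Finset.Icc j n, w k * c k := by
  intro d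
  induction d with
  | zero =>
    intro j hj _ _ _
    have : j = n := by omega
    subst this
    simp
  | succ d ih =>
    intro j hj hj1 hS hc
    have hjn : j < n := by omega
    have hsplit : Finset.Icc j n = insert j (Finset.Icc (j + 1) n) := by
      ext k; simp only [Finset.mem_Icc, Finset.mem_insert]; omega
    have hnot : j ∉ Finset.Icc (j + 1) n := by simp
    rw [hsplit, Finset.sum_insert hnot, Finset.sum_insert hnot]
    have hIH := ih (j + 1) (by omega) (by omega)
      (fun k hk1 hk2 => hS k (by omega) hk2) (fun k hk1 hk2 => hc k (by omega) hk2)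
    have hS' : 0 ≤ ∑ i ∈ Finset.Icc (j + 1) n, w i := hS (j + 1) (by omega) (by omega)
    have hcj : c j ≤ c (j + 1) := hc j le_rfl hjn
    nlinarith [mul_le_mul_of_nonneg_left hcj hS']

private lemma sum_reflect (g : ℕ → ℝ) (n m : ℕ) (hm : m ≤ n) :
    ∑ k ∈ Finset.Icc 1 m, g (n + 1 - k) = ∑ k ∈ Finset.Icc (n + 1 - m) n, g k := by
  refine Finset.sum_nbij' (fun k => n + 1 - k) (fun k => n + 1 - k) ?_ ?_ ?_ ?_ ?_ <;>
    intro a ha <;> simp only [Finset.mem_Icc] at * <;> omega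

private lemma sum_split (g : ℕ → ℝ) (m n : ℕ) (hm : m ≤ n) :
    ∑ k ∈ Finset.Icc 1 n, g k =
      ∑ k ∈ Finset.Icc 1 m, g k + ∑ k ∈ Finset.Icc (m + 1) n, g k := by
  have e1 : ∀ x : ℕ, Finset.Icc 1 x = Finset.Ioc 0 x := by
    intro x; ext k; simp only [Finset.mem_Icc, Finset.mem_Ioc]; omega
  have e2 : Finset.Icc (m + 1) n = Finset.Ioc m n := by
    ext k; simp only [Finset.mem_Icc, Finset.mem_Ioc]; omega
  rw [e1, e1, e2, Finset.sum_Ioc_consecutive _ (Nat.zero_le m) hm]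

/-- Core positivity: split at `m`, Abel on each side. -/
private lemma core (n : ℕ) (hn : 1 ≤ n) (w C : ℕ → ℝ) (m : ℕ) (hm : m ≤ n)
    (hS : ∀ k, 1 ≤ k → k ≤ n → 0 ≤ ∑ j ∈ Finset.Icc 1 k, w j)
    (hB : ∀ k, 1 ≤ k → k ≤ n → 0 ≤ ∑ i ∈ Finset.Icc k n, w i)
    (hC0 : ∀ k, 1 ≤ k → k ≤ n → 0 ≤ C k)
    (hCl : ∀ k, 1 ≤ k → k + 1 ≤ m → C (k + 1) ≤ C k)
    (hCr : ∀ k, m + 1 ≤ k → k < n → C k ≤ C (k + 1)) :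
    0 ≤ ∑ k ∈ Finset.Icc 1 n, w k * C k := by
  rcases Nat.eq_zero_or_pos m with rfl | hm1
  · have h := abelR w C n (n - 1) 1 (by omega) le_rfl
      (fun k hk1 hk2 => hB k hk1 hk2) (fun k hk1 hk2 => hCr k (by omega) hk2)
    have h0 : 0 ≤ (∑ i ∈ Finset.Icc 1 n, w i) * C 1 :=
      mul_nonneg (hB 1 le_rfl hn) (hC0 1 le_rfl hn)
    linarith
  · rw [sum_split (fun k => w k * C k) m n hm]
    have hleft := abelL w C m hm1 (fun k hk1 hk2 => hS k hk1 (by omega))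
      (fun k hk1 hk2 => hCl k hk1 (by omega))
    have hl0 : 0 ≤ (∑ j ∈ Finset.Icc 1 m, w j) * C m := mul_nonneg (hS m hm1 hm) (hC0 m hm1 hm)
    rcases eq_or_lt_of_le hm with rfl | hmn
    · rw [Finset.Icc_eq_empty (by omega : ¬ m + 1 ≤ m), Finset.sum_empty]
      linarith
    · have hr := abelR w C n (n - (m + 1)) (m + 1) (by omega) (by omega)
        (fun k hk1 hk2 => hB k (by omega) hk2) (fun k hk1 hk2 => hCr k hk1 hk2)
      have hr0 : 0 ≤ (∑ i ∈ Finset.Icc (m + 1) n, w i) * C (m + 1) :=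
        mul_nonneg (hB (m + 1) (by omega) hmn) (hC0 (m + 1) (by omega) hmn)
      linarith

/-- Jensen–Steffensen for nonincreasing `x`. -/
private lemma key (a b : ℝ) (hab : a ≤ b) (n : ℕ) (hn : 1 ≤ n) (x w : ℕ → ℝ)
    (hx_mem : ∀ k, 1 ≤ k → k ≤ n → x k ∈ Set.Icc a b)
    (hdec : ∀ k, 1 ≤ k → k < n → x (k + 1) ≤ x k)
    (hw_sum : ∑ k ∈ Finset.Icc 1 n, w k = 1)
    (hw_partial : ∀ m, 1 ≤ m → m ≤ n →
      0 ≤ ∑ k ∈ Finset.Icc 1 m, w k ∧ ∑ k ∈ Finset.Icc 1 m, w k ≤ 1)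
    (f : ℝ → ℝ) (hf : ConvexOn ℝ (Set.Icc a b) f) :
    (∑ k ∈ Finset.Icc 1 n, w k * x k) ∈ Set.Icc a b ∧
      f (∑ k ∈ Finset.Icc 1 n, w k * x k) ≤ ∑ k ∈ Finset.Icc 1 n, w k * f (x k) := by
  set X := ∑ k ∈ Finset.Icc 1 n, w k * x k with hXdef
  -- monotonicity across indices
  have hmono : ∀ i j : ℕ, 1 ≤ i → i ≤ j → j ≤ n → x j ≤ x i := by
    intro i j hi hij
    induction j, hij using Nat.le_induction with
    | base => exact fun _ => le_rfl
    | succ j hj ih =>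
      intro hjn
      exact le_trans (hdec j (by omega) (by omega)) (ih (by omega))
  -- backward partial sums are nonnegative
  have hback : ∀ k, 1 ≤ k → k ≤ n → 0 ≤ ∑ i ∈ Finset.Icc k n, w i := by
    intro k hk1 hkn
    obtain ⟨k', rfl⟩ : ∃ k', k = k' + 1 := ⟨k - 1, by omega⟩
    rcases Nat.eq_zero_or_pos k' with rfl | hk'
    · rw [hw_sum]; norm_num
    · have hsplit := sum_split w k' n (by omega)
      have := (hw_partial k' hk' (by omega)).2
      linarith [hw_sum, hsplit]
  -- X ≤ x 1
  have hX1 : X ≤ x 1 := by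
    have h := abelR w (fun k => x 1 - x k) n (n - 1) 1 (by omega) le_rfl hback
      (fun k hk1 hk2 => by have := hdec k hk1 hk2; linarith)
    simp only [sub_self, mul_zero, mul_sub] at h
    rw [Finset.sum_sub_distrib, ← Finset.sum_mul, hw_sum] at h
    simp only [one_mul] at h
    linarith
  -- x n ≤ X
  have hXn : x n ≤ X := by
    have h := abelL w x n hn (fun k hk1 hk2 => (hw_partial k hk1 hk2).1) hdec
    rw [hw_sum, one_mul] at h
    exact h
  have hXI : X ∈ Set.Icc a b :=
    ⟨le_trans (hx_mem n hn le_rfl).1 hXn, le_trans hX1 (hx_mem 1 le_rfl hn).2⟩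
  refine ⟨hXI, ?_⟩
  -- slope monotonicity
  have hsl := hf.slope_mono hXI
  have hslx : ∀ i j : ℕ, 1 ≤ i → i ≤ n → 1 ≤ j → j ≤ n → x i ≤ x j → x i ≠ X → x j ≠ X →
      slope f X (x i) ≤ slope f X (x j) := by
    intro i j hi1 hin hj1 hjn hij hi hj
    exact hsl ⟨hx_mem i hi1 hin, by simp [hi]⟩ ⟨hx_mem j hj1 hjn, by simp [hj]⟩ hij
  -- choose the split point m and slope constant c
  obtain ⟨m, c, hmn, hP1, hP2, hP3, hP4⟩ :
      ∃ (m : ℕ) (c : ℝ), m ≤ n ∧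
        (∀ k, 1 ≤ k → k ≤ n → k ≤ m → X < x k) ∧
        (∀ k, 1 ≤ k → k ≤ n → m < k → x k ≤ X) ∧
        (∀ k, 1 ≤ k → k ≤ n → X < x k → c ≤ slope f X (x k)) ∧
        (∀ k, 1 ≤ k → k ≤ n → x k < X → slope f X (x k) ≤ c) := by
    classical
    set T := (Finset.Icc 1 n).filter (fun k => X < x k) with hTdef
    set N := (Finset.Icc 1 n).filter (fun k => x k < X) with hNdef
    have hmemT : ∀ k, k ∈ T ↔ (1 ≤ k ∧ k ≤ n ∧ X < x k) := by
      intro k; simp [hTdef, Finset.mem_Icc, and_assoc]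
    have hmemN : ∀ k, k ∈ N ↔ (1 ≤ k ∧ k ≤ n ∧ x k < X) := by
      intro k; simp [hNdef, Finset.mem_Icc, and_assoc]
    by_cases hT : T.Nonempty
    · set m := T.max' hT with hmdef
      have hmT := T.max'_mem hT
      rw [hmemT] at hmT
      have hP1 : ∀ k, 1 ≤ k → k ≤ n → k ≤ m → X < x k := by
        intro k hk1 hkn hkm
        exact lt_of_lt_of_le hmT.2.2 (hmono k m hk1 hkm hmT.2.1)
      have hP2 : ∀ k, 1 ≤ k → k ≤ n → m < k → x k ≤ X := by
        intro k hk1 hkn hmk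
        by_contra h
        push_neg at h
        have : k ∈ T := (hmemT k).mpr ⟨hk1, hkn, h⟩
        have := Finset.le_max' T k this
        omega
      by_cases hN : N.Nonempty
      · refine ⟨m, slope f X (x (N.min' hN)), hmT.2.1, hP1, hP2, ?_, ?_⟩
        · intro k hk1 hkn hxk
          have hqN := N.min'_mem hN
          rw [hmemN] at hqN
          exact hslx _ k hqN.1 hqN.2.1 hk1 hkn (le_of_lt (lt_trans hqN.2.2 hxk))
            (ne_of_lt hqN.2.2) (ne_of_gt hxk)
        · intro k hk1 hkn hxk
          have hqN := N.min'_mem hN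
          rw [hmemN] at hqN
          have hkq : N.min' hN ≤ k := Finset.min'_le N k ((hmemN k).mpr ⟨hk1, hkn, hxk⟩)
          exact hslx k _ hk1 hkn hqN.1 hqN.2.1 (hmono _ k hqN.1 hkq hkn)
            (ne_of_lt hxk) (ne_of_lt hqN.2.2)
      · refine ⟨m, slope f X (x m), hmT.2.1, hP1, hP2, ?_, ?_⟩
        · intro k hk1 hkn hxk
          have hkm : k ≤ m := Finset.le_max' T k ((hmemT k).mpr ⟨hk1, hkn, hxk⟩)
          exact hslx m k hmT.1 hmT.2.1 hk1 hkn (hmono k m hk1 hkm hmT.2.1)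
            (ne_of_gt hmT.2.2) (ne_of_gt hxk)
        · intro k hk1 hkn hxk
          exact absurd ((hmemN k).mpr ⟨hk1, hkn, hxk⟩) (by simp [Finset.not_nonempty_iff_eq_empty.mp hN])
    · have hP1 : ∀ k, 1 ≤ k → k ≤ n → k ≤ 0 → X < x k := by intro k hk1; omega
      have hP2 : ∀ k, 1 ≤ k → k ≤ n → 0 < k → x k ≤ X := by
        intro k hk1 hkn _
        by_contra h
        push_neg at h
        exact absurd ((hmemT k).mpr ⟨hk1, hkn, h⟩) (by simp [Finset.not_nonempty_iff_eq_empty.mp hT])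
      by_cases hN : N.Nonempty
      · refine ⟨0, slope f X (x (N.min' hN)), Nat.zero_le n, hP1, hP2, ?_, ?_⟩
        · intro k hk1 hkn hxk
          exact absurd ((hmemT k).mpr ⟨hk1, hkn, hxk⟩) (by simp [Finset.not_nonempty_iff_eq_empty.mp hT])
        · intro k hk1 hkn hxk
          have hqN := N.min'_mem hN
          rw [hmemN] at hqN
          have hkq : N.min' hN ≤ k := Finset.min'_le N k ((hmemN k).mpr ⟨hk1, hkn, hxk⟩)
          exact hslx k _ hk1 hkn hqN.1 hqN.2.1 (hmono _ k hqN.1 hkq hkn)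
            (ne_of_lt hxk) (ne_of_lt hqN.2.2)
      · refine ⟨0, 0, Nat.zero_le n, hP1, hP2, ?_, ?_⟩
        · intro k hk1 hkn hxk
          exact absurd ((hmemT k).mpr ⟨hk1, hkn, hxk⟩) (by simp [Finset.not_nonempty_iff_eq_empty.mp hT])
        · intro k hk1 hkn hxk
          exact absurd ((hmemN k).mpr ⟨hk1, hkn, hxk⟩) (by simp [Finset.not_nonempty_iff_eq_empty.mp hN])
  classical
  set C : ℕ → ℝ := fun k => (if x k = X then 0 else slope f X (x k) - c) * (x k - X) with hCdef
  have hCeq : ∀ k, C k = f (x k) - f X - c * (x k - X) := by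
    intro k
    by_cases h : x k = X
    · simp [hCdef, h]
    · have hne : x k - X ≠ 0 := sub_ne_zero.mpr h
      simp only [hCdef, if_neg h, slope_def_field]
      field_simp
  -- nonnegativity of C
  have hC0 : ∀ k, 1 ≤ k → k ≤ n → 0 ≤ C k := by
    intro k hk1 hkn
    rcases lt_trichotomy (x k) X with h | h | h
    · have hs := hP4 k hk1 hkn h
      simp only [hCdef, if_neg (ne_of_lt h)]
      nlinarith
    · simp [hCdef, h]
    · have hs := hP3 k hk1 hkn h
      simp only [hCdef, if_neg (ne_of_gt h)]
      nlinarith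
  -- monotonicity of C on [1, m]
  have hCl : ∀ k, 1 ≤ k → k + 1 ≤ m → C (k + 1) ≤ C k := by
    intro k hk1 hkm
    have hk1n : k + 1 ≤ n := le_trans hkm hmn
    have hxk : X < x k := hP1 k hk1 (by omega) (by omega)
    have hxk1 : X < x (k + 1) := hP1 (k + 1) (by omega) hk1n hkm
    have hdx : x (k + 1) ≤ x k := hdec k hk1 (by omega)
    have hsm : slope f X (x (k + 1)) ≤ slope f X (x k) :=
      hslx (k + 1) k (by omega) hk1n hk1 (by omega) hdx (ne_of_gt hxk1) (ne_of_gt hxk)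
    have hc1 := hP3 (k + 1) (by omega) hk1n hxk1
    simp only [hCdef, if_neg (ne_of_gt hxk), if_neg (ne_of_gt hxk1)]
    nlinarith
  -- monotonicity of C on [m+1, n]
  have hCr : ∀ k, m + 1 ≤ k → k < n → C k ≤ C (k + 1) := by
    intro k hk hkn
    have hk1 : 1 ≤ k := by omega
    have hxk : x k ≤ X := hP2 k hk1 (by omega) (by omega)
    have hxk1 : x (k + 1) ≤ X := hP2 (k + 1) (by omega) (by omega) (by omega)
    have hdx : x (k + 1) ≤ x k := hdec k hk1 hkn
    rcases eq_or_lt_of_le hxk1 with heq | hlt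
    · have hxkeq : x k = X := le_antisymm hxk (heq ▸ hdx)
      simp [hCdef, hxkeq, heq]
    · rcases eq_or_lt_of_le hxk with heqk | hltk
      · rw [show C k = 0 by simp [hCdef, heqk]]
        exact hC0 (k + 1) (by omega) (by omega)
      · have hsm : slope f X (x (k + 1)) ≤ slope f X (x k) :=
          hslx (k + 1) k (by omega) (by omega) hk1 (by omega) hdx (ne_of_lt hlt) (ne_of_lt hltk)
        have hc1 := hP4 k hk1 (by omega) hltk
        simp only [hCdef, if_neg (ne_of_lt hltk), if_neg (ne_of_lt hlt)]
        nlinarith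
  -- assemble
  have hpos := core n hn w C m hmn (fun k hk1 hk2 => (hw_partial k hk1 hk2).1) hback hC0 hCl hCr
  have hkey : ∑ k ∈ Finset.Icc 1 n, w k * C k
      = (∑ k ∈ Finset.Icc 1 n, w k * f (x k)) - f X := by
    have h1 : ∀ k ∈ Finset.Icc 1 n, w k * C k
        = w k * f (x k) - f X * w k - c * (w k * x k) + (c * X) * w k := by
      intro k _
      rw [hCeq k]; ring
    rw [Finset.sum_congr rfl h1]
    rw [Finset.sum_add_distrib, Finset.sum_sub_distrib, Finset.sum_sub_distrib,
      ← Finset.mul_sum, ← Finset.mul_sum, ← Finset.mul_sum, hw_sum, ← hXdef]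
    ring
  linarith [hpos, hkey.symm ▸ hpos]

/-- The Jensen–Steffensen inequality: if `x₁, …, xₙ` is a monotone family in `[a, b]` and
`w₁, …, wₙ` are real weights with `∑ w_k = 1` and `0 ≤ ∑_{k=1}^m w_k ≤ 1` for all `m`,
then `∑ w_k x_k ∈ [a, b]` and every convex `f : [a, b] → ℝ` satisfies
`f(∑ w_k x_k) ≤ ∑ w_k f(x_k)`. -/
theorem abel_partial_summation_stmt13
    (a b : ℝ) (hab : a ≤ b) (n : ℕ) (hn : 1 ≤ n) (x w : ℕ → ℝ)
    (hx_mem : ∀ k, 1 ≤ k → k ≤ n → x k ∈ Set.Icc a b)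
    (hx_mono : (∀ k, 1 ≤ k → k < n → x k ≤ x (k + 1)) ∨
               (∀ k, 1 ≤ k → k < n → x (k + 1) ≤ x k))
    (hw_sum : ∑ k ∈ Finset.Icc 1 n, w k = 1)
    (hw_partial : ∀ m, 1 ≤ m → m ≤ n →
      0 ≤ ∑ k ∈ Finset.Icc 1 m, w k ∧ ∑ k ∈ Finset.Icc 1 m, w k ≤ 1)
    (f : ℝ → ℝ) (hf : ConvexOn ℝ (Set.Icc a b) f) :
    (∑ k ∈ Finset.Icc 1 n, w k * x k) ∈ Set.Icc a b ∧
      f (∑ k ∈ Finset.Icc 1 n, w k * x k) ≤ ∑ k ∈ Finset.Icc 1 n, w k * f (x k) := by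
  rcases hx_mono with hinc | hdec
  · -- increasing case: reflect the indices
    set x' : ℕ → ℝ := fun k => x (n + 1 - k) with hx'
    set w' : ℕ → ℝ := fun k => w (n + 1 - k) with hw'
    have hrefl : ∀ g : ℕ → ℝ, ∑ k ∈ Finset.Icc 1 n, g (n + 1 - k) = ∑ k ∈ Finset.Icc 1 n, g k := by
      intro g
      rw [sum_reflect g n n le_rfl, show n + 1 - n = 1 from by omega]
    have hmem' : ∀ k, 1 ≤ k → k ≤ n → x' k ∈ Set.Icc a b := by
      intro k hk1 hkn
      exact hx_mem (n + 1 - k) (by omega) (by omega)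
    have hdec' : ∀ k, 1 ≤ k → k < n → x' (k + 1) ≤ x' k := by
      intro k hk1 hkn
      have e1 : n + 1 - (k + 1) = n - k := by omega
      have e2 : n + 1 - k = (n - k) + 1 := by omega
      simp only [hx', e1, e2]
      exact hinc (n - k) (by omega) (by omega)
    have hw_sum' : ∑ k ∈ Finset.Icc 1 n, w' k = 1 := by
      rw [show ∑ k ∈ Finset.Icc 1 n, w' k = ∑ k ∈ Finset.Icc 1 n, w (n + 1 - k) from rfl,
        hrefl w, hw_sum]
    have hw_partial' : ∀ m, 1 ≤ m → m ≤ n →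
        0 ≤ ∑ k ∈ Finset.Icc 1 m, w' k ∧ ∑ k ∈ Finset.Icc 1 m, w' k ≤ 1 := by
      intro m hm1 hmn
      rw [show ∑ k ∈ Finset.Icc 1 m, w' k = ∑ k ∈ Finset.Icc 1 m, w (n + 1 - k) from rfl,
        sum_reflect w n m hmn]
      have hsplit := sum_split w (n - m) n (by omega)
      rw [show n - m + 1 = n + 1 - m from by omega] at hsplit
      rcases Nat.eq_zero_or_pos (n - m) with h0 | h1
      · rw [h0, Finset.Icc_eq_empty (by omega : ¬ (1:ℕ) ≤ 0), Finset.sum_empty] at hsplit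
        constructor <;> linarith [hw_sum]
      · have := hw_partial (n - m) h1 (by omega)
        constructor <;> linarith [hw_sum, this.1, this.2]
    obtain ⟨hmem, hle⟩ := key a b hab n hn x' w' hmem' hdec' hw_sum' hw_partial' f hf
    have e1 : ∑ k ∈ Finset.Icc 1 n, w' k * x' k = ∑ k ∈ Finset.Icc 1 n, w k * x k := by
      rw [show ∑ k ∈ Finset.Icc 1 n, w' k * x' k
          = ∑ k ∈ Finset.Icc 1 n, (fun j => w j * x j) (n + 1 - k) from rfl,
        hrefl (fun j => w j * x j)]
    have e2 : ∑ k ∈ Finset.Icc 1 n, w' k * f (x' k) = ∑ k ∈ Finset.Icc 1 n, w k * f (x k) := by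
      rw [show ∑ k ∈ Finset.Icc 1 n, w' k * f (x' k)
          = ∑ k ∈ Finset.Icc 1 n, (fun j => w j * f (x j)) (n + 1 - k) from rfl,
        hrefl (fun j => w j * f (x j))]
    rw [e1] at hmem hle
    rw [e2] at hle
    exact ⟨hmem, hle⟩
  · exact key a b hab n hn x w hx_mem hdec hw_sum hw_partial f hf
end

section
/- Let E be a Banach lattice, let x₁ ≤ x₂ ≤ ⋯ ≤ xₙ be an increasing family of elements of E, and let w₁, …, wₙ be real weights such that ∑_{k=1}^{n} w_k = 1 and 0 ≤ ∑_{k=1}^{m} w_k ≤ 1 for every m ∈ {1, …, n}. Then |∑_{k=1}^{n} w_k x_k| ≤ ∑_{k=1}^{n} w_k |x_k|, where |z| = sup{−z, z} denotes the lattice modulus. (Equivalently, ∑_{k=1}^{n} w_k x_k⁺ ≥ 0 and ∑_{k=1}^{n} w_k x_k⁻ ≥ 0, where z⁺ = sup{z, 0} and z⁻ = sup{−z, 0}.) -/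
section Aux

variable {E : Type*} [NormedAddCommGroup E] [Lattice E] [HasSolidNorm E] [IsOrderedAddMonoid E]
  [NormedSpace ℝ E]

/-- Nonnegative real scalars preserve the positive cone in a normed lattice. -/
lemma aux_smul_nonneg {a : ℝ} (ha : 0 ≤ a) {b : E} (hb : 0 ≤ b) : 0 ≤ a • b := by
  -- first, dyadic rationals
  have dyadic : ∀ k p : ℕ, 0 ≤ ((p : ℝ) / 2 ^ k) • b := by
    intro k
    induction k with
    | zero =>
      intro p
      simpa [Nat.cast_smul_eq_nsmul] using nsmul_nonneg hb p
    | succ k ih =>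
      intro p
      apply nsmul_two_semiclosed
      have h2 : (2 : ℕ) • (((p : ℝ) / 2 ^ (k + 1)) • b)
          = ((p : ℝ) / 2 ^ k) • b := by
        rw [two_smul, ← add_smul]
        congr 1
        ring
      rw [h2]
      exact ih p
  have hfl : Filter.Tendsto (fun x : ℝ => ((⌊a * x⌋₊ : ℝ) / x)) Filter.atTop (nhds a) :=
    tendsto_nat_floor_mul_div_atTop ha
  have hpow : Filter.Tendsto (fun k : ℕ => (2 : ℝ) ^ k) Filter.atTop Filter.atTop :=
    tendsto_pow_atTop_atTop_of_one_lt one_lt_two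
  have hseq : Filter.Tendsto (fun k : ℕ => ((⌊a * 2 ^ k⌋₊ : ℝ) / 2 ^ k))
      Filter.atTop (nhds a) := hfl.comp hpow
  have hts : Filter.Tendsto (fun k : ℕ => ((⌊a * 2 ^ k⌋₊ : ℝ) / 2 ^ k) • b)
      Filter.atTop (nhds (a • b)) := hseq.smul_const b
  exact isClosed_nonneg.mem_of_tendsto hts
    (Filter.Eventually.of_forall fun k => dyadic k _)

lemma aux_smul_le_smul {a : ℝ} (ha : 0 ≤ a) {b c : E} (h : b ≤ c) :
    a • b ≤ a • c := by
  have := aux_smul_nonneg ha (sub_nonneg.2 h)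
  rwa [smul_sub, sub_nonneg] at this

/-- Abel-type bound, antitone case. -/
lemma aux_antitone (w : ℕ → ℝ) (y : ℕ → E) :
    ∀ n, 1 ≤ n → (∀ k, 1 ≤ k → k < n → y (k + 1) ≤ y k) →
    (∀ m, 1 ≤ m → m < n → 0 ≤ ∑ k ∈ Finset.Icc 1 m, w k) →
    (∑ k ∈ Finset.Icc 1 n, w k) • y n ≤ ∑ k ∈ Finset.Icc 1 n, w k • y k := by
  intro n
  induction n with
  | zero => omega
  | succ n ih =>
    intro _ hy hW
    rcases Nat.eq_zero_or_pos n with h1 | h1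
    · subst h1; simp
    · have hn : 1 ≤ n := by omega
      rw [Finset.sum_Icc_succ_top (by omega) w, Finset.sum_Icc_succ_top (by omega)
        (fun k => w k • y k), add_smul]
      have step1 : (∑ k ∈ Finset.Icc 1 n, w k) • y (n + 1)
          ≤ (∑ k ∈ Finset.Icc 1 n, w k) • y n :=
        aux_smul_le_smul (hW n hn (by omega)) (hy n hn (by omega))
      have step2 : (∑ k ∈ Finset.Icc 1 n, w k) • y n
          ≤ ∑ k ∈ Finset.Icc 1 n, w k • y k :=
        ih hn (fun k hk hk' => hy k hk (by omega)) (fun m hm hm' => hW m hm (by omega))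
      exact add_le_add_left (step1.trans step2) _

/-- Abel-type bound, monotone case. -/
lemma aux_monotone (w : ℕ → ℝ) (y : ℕ → E) :
    ∀ n, 1 ≤ n → (∀ k, 1 ≤ k → k < n → y k ≤ y (k + 1)) →
    (∀ m, 1 ≤ m → m < n → ∑ k ∈ Finset.Icc 1 m, w k ≤ 1) →
    y 1 + (∑ k ∈ Finset.Icc 1 n, w k - 1) • y n ≤ ∑ k ∈ Finset.Icc 1 n, w k • y k := by
  intro n
  induction n with
  | zero => omega
  | succ n ih =>
    intro _ hy hW
    rcases Nat.eq_zero_or_pos n with h1 | h1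
    · subst h1
      simp [sub_smul]
    · have hn : 1 ≤ n := by omega
      rw [Finset.sum_Icc_succ_top (by omega) w, Finset.sum_Icc_succ_top (by omega)
        (fun k => w k • y k)]
      have step1 : (∑ k ∈ Finset.Icc 1 n, w k - 1) • y (n + 1)
          ≤ (∑ k ∈ Finset.Icc 1 n, w k - 1) • y n := by
        have h0 : (0 : ℝ) ≤ 1 - ∑ k ∈ Finset.Icc 1 n, w k :=
          sub_nonneg.2 (hW n hn (by omega))
        have := aux_smul_le_smul h0 (hy n hn (by omega))
        have h2 := neg_le_neg this
        rwa [← neg_smul, ← neg_smul, neg_sub] at h2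
      have step2 : y 1 + (∑ k ∈ Finset.Icc 1 n, w k - 1) • y n
          ≤ ∑ k ∈ Finset.Icc 1 n, w k • y k :=
        ih hn (fun k hk hk' => hy k hk (by omega)) (fun m hm hm' => hW m hm (by omega))
      calc y 1 + (∑ k ∈ Finset.Icc 1 n, w k + w (n + 1) - 1) • y (n + 1)
          = y 1 + ((∑ k ∈ Finset.Icc 1 n, w k - 1) • y (n + 1) + w (n + 1) • y (n + 1)) := by
            rw [← add_smul]; ring_nf
        _ ≤ y 1 + ((∑ k ∈ Finset.Icc 1 n, w k - 1) • y n + w (n + 1) • y (n + 1)) := by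
            gcongr
        _ = (y 1 + (∑ k ∈ Finset.Icc 1 n, w k - 1) • y n) + w (n + 1) • y (n + 1) := by abel
        _ ≤ (∑ k ∈ Finset.Icc 1 n, w k • y k) + w (n + 1) • y (n + 1) :=
            add_le_add_left step2 _

end Aux

/-- Jensen–Steffensen type inequality in a Banach lattice: for an increasing family
`x₁ ≤ ⋯ ≤ xₙ` and real weights with `∑ w_k = 1` and `0 ≤ ∑_{k=1}^m w_k ≤ 1`, one has
`∑ w_k x_k⁺ ≥ 0`, `∑ w_k x_k⁻ ≥ 0`, and `|∑ w_k x_k| ≤ ∑ w_k |x_k|`. -/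
theorem abel_partial_summation_stmt15
    {E : Type*}
    [NormedAddCommGroup E] [Lattice E] [HasSolidNorm E] [IsOrderedAddMonoid E]
    [NormedSpace ℝ E] [CompleteSpace E]
    (n : ℕ) (hn : 1 ≤ n) (x : ℕ → E) (w : ℕ → ℝ)
    (hx_mono : ∀ k, 1 ≤ k → k < n → x k ≤ x (k + 1))
    (hw_sum : ∑ k ∈ Finset.Icc 1 n, w k = 1)
    (hw_partial : ∀ m, 1 ≤ m → m ≤ n →
      0 ≤ ∑ k ∈ Finset.Icc 1 m, w k ∧ ∑ k ∈ Finset.Icc 1 m, w k ≤ 1) :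
    0 ≤ ∑ k ∈ Finset.Icc 1 n, w k • (x k)⁺ ∧
    0 ≤ ∑ k ∈ Finset.Icc 1 n, w k • (x k)⁻ ∧
    |∑ k ∈ Finset.Icc 1 n, w k • x k| ≤ ∑ k ∈ Finset.Icc 1 n, w k • |x k| := by
  have hA : 0 ≤ ∑ k ∈ Finset.Icc 1 n, w k • (x k)⁺ := by
    have := aux_monotone w (fun k => (x k)⁺) n hn
      (fun k hk hk' => posPart_mono (hx_mono k hk hk'))
      (fun m hm hm' => (hw_partial m hm (le_of_lt hm')).2)
    rw [hw_sum] at this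
    simp only [sub_self, zero_smul, add_zero] at this
    exact (posPart_nonneg (x 1)).trans this
  have hB : 0 ≤ ∑ k ∈ Finset.Icc 1 n, w k • (x k)⁻ := by
    have := aux_antitone w (fun k => (x k)⁻) n hn
      (fun k hk hk' => negPart_anti (hx_mono k hk hk'))
      (fun m hm hm' => (hw_partial m hm (le_of_lt hm')).1)
    rw [hw_sum, one_smul] at this
    exact (negPart_nonneg (x n)).trans this
  refine ⟨hA, hB, ?_⟩
  have hsum : ∑ k ∈ Finset.Icc 1 n, w k • x k
      = (∑ k ∈ Finset.Icc 1 n, w k • (x k)⁺) - ∑ k ∈ Finset.Icc 1 n, w k • (x k)⁻ := by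
    rw [← Finset.sum_sub_distrib]
    refine Finset.sum_congr rfl fun k _ => ?_
    rw [← smul_sub, posPart_sub_negPart]
  have habs : ∑ k ∈ Finset.Icc 1 n, w k • |x k|
      = (∑ k ∈ Finset.Icc 1 n, w k • (x k)⁺) + ∑ k ∈ Finset.Icc 1 n, w k • (x k)⁻ := by
    rw [← Finset.sum_add_distrib]
    refine Finset.sum_congr rfl fun k _ => ?_
    rw [← smul_add, posPart_add_negPart]
  rw [hsum, habs]
  set A := ∑ k ∈ Finset.Icc 1 n, w k • (x k)⁺ with hAdef
  set B := ∑ k ∈ Finset.Icc 1 n, w k • (x k)⁻ with hBdef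
  refine abs_le'.2 ⟨?_, ?_⟩
  · calc A - B = A + -B := sub_eq_add_neg A B
      _ ≤ A + B := add_le_add_right ((neg_nonpos.2 hB).trans hB) A
  · rw [neg_sub]
    calc B - A = B + -A := sub_eq_add_neg B A
      _ ≤ B + A := add_le_add_right ((neg_nonpos.2 hA).trans hA) B
      _ = A + B := add_comm B A
end

section
/- Let A₁, …, Aₙ and B₁, …, Bₙ be real symmetric N×N matrices such that A₁ ≥ A₂ ≥ ⋯ ≥ Aₙ ≥ 0 in the Loewner order and ∑_{k=1}^{j} A_k ≤ ∑_{k=1}^{j} B_k in the Loewner order for every j ∈ {1, 2, …, n}. Then ∑_{k=1}^{n} Trace(A_k²) ≤ ∑_{k=1}^{n} Trace(A_k B_k). -/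
open Matrix Finset

lemma trace_nonneg_of_psd {m : ℕ} {P : Matrix (Fin m) (Fin m) ℝ} (hP : P.PosSemidef) :
    0 ≤ P.trace := by
  apply Finset.sum_nonneg
  intro i _
  have := hP.dotProduct_mulVec_nonneg (Pi.single i 1)
  simpa [Matrix.mulVec, dotProduct, Pi.single_apply] using this

lemma trace_mul_nonneg_of_psd {m : ℕ} {P Q : Matrix (Fin m) (Fin m) ℝ}
    (hP : P.PosSemidef) (hQ : Q.PosSemidef) : 0 ≤ (P * Q).trace := by
  classical
  open scoped MatrixOrder in
  obtain ⟨X, rfl⟩ := CStarAlgebra.nonneg_iff_eq_star_mul_self.mp hP.nonneg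
  have h2 : (X * Q * Xᴴ).PosSemidef := hQ.mul_mul_conjTranspose_same X
  calc (0:ℝ) ≤ (X * Q * Xᴴ).trace := trace_nonneg_of_psd h2
    _ = (star X * X * Q).trace := by
        rw [star_eq_conjTranspose, Matrix.trace_mul_comm, Matrix.mul_assoc]

lemma key_abel (m : ℕ) : ∀ (n : ℕ) (A B : ℕ → Matrix (Fin m) (Fin m) ℝ), 1 ≤ n →
    (∀ k, 1 ≤ k → k < n → (A k - A (k + 1)).PosSemidef) →
    (A n).PosSemidef →
    (∀ j, 1 ≤ j → j ≤ n →
      (∑ k ∈ Finset.Icc 1 j, B k - ∑ k ∈ Finset.Icc 1 j, A k).PosSemidef) →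
    0 ≤ ∑ k ∈ Finset.Icc 1 n, (A k * (B k - A k)).trace := by
  intro n
  induction n with
  | zero => omega
  | succ n ih =>
    intro A B _ hanti hpos hAB
    by_cases hn1 : n = 0
    · subst hn1
      simp only [Finset.Icc_self, Finset.sum_singleton]
      exact trace_mul_nonneg_of_psd hpos (by simpa using hAB 1 le_rfl le_rfl)
    · have hn1' : 1 ≤ n := Nat.one_le_iff_ne_zero.mpr hn1
      set M := A (n+1) with hM
      have ihyp := ih (fun k => A k - M) (fun k => B k - M) hn1'
        (fun k hk hkn => by
          simpa [sub_sub_sub_cancel_right] using hanti k hk (by omega))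
        (by simpa using hanti n hn1' (by omega))
        (fun j hj hjn => by
          have := hAB j hj (by omega)
          simpa [Finset.sum_sub_distrib, sub_sub_sub_cancel_right] using this)
      have heq : ∀ k, ((A k - M) * ((B k - M) - (A k - M))) = (A k - M) * (B k - A k) := by
        intro k; congr 1; abel
      simp only [heq] at ihyp
      have e1 : ∀ k ∈ Finset.Icc 1 (n+1), (A k * (B k - A k)).trace
          = ((A k - M) * (B k - A k)).trace + (M * (B k - A k)).trace := by
        intro k _
        rw [← Matrix.trace_add, ← Matrix.add_mul, sub_add_cancel]
      rw [Finset.sum_congr rfl e1, Finset.sum_add_distrib]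
      have e2 : ∑ k ∈ Finset.Icc 1 (n+1), ((A k - M) * (B k - A k)).trace
          = ∑ k ∈ Finset.Icc 1 n, ((A k - M) * (B k - A k)).trace := by
        rw [Finset.sum_Icc_succ_top (by omega : 1 ≤ n+1)]
        simp [hM]
      have e3 : ∑ k ∈ Finset.Icc 1 (n+1), (M * (B k - A k)).trace
          = (M * (∑ k ∈ Finset.Icc 1 (n+1), B k - ∑ k ∈ Finset.Icc 1 (n+1), A k)).trace := by
        rw [← Finset.sum_sub_distrib, Finset.mul_sum, Matrix.trace_sum]
      rw [e2, e3]
      have h2 : 0 ≤ (M * (∑ k ∈ Finset.Icc 1 (n+1), B k - ∑ k ∈ Finset.Icc 1 (n+1), A k)).trace :=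
        trace_mul_nonneg_of_psd hpos (hAB (n+1) (by omega) le_rfl)
      linarith

/-- Trace inequality: if `A₁ ≥ ⋯ ≥ Aₙ ≥ 0` in the Loewner order on real symmetric
matrices and `∑_{k=1}^j A_k ≤ ∑_{k=1}^j B_k` for all `j`, then
`∑ Trace(A_k²) ≤ ∑ Trace(A_k B_k)`. -/
theorem abel_partial_summation_stmt17
    (N : ℕ) (n : ℕ) (hn : 1 ≤ n)
    (A B : ℕ → Matrix (Fin N) (Fin N) ℝ)
    (hA_symm : ∀ k, (A k).IsSymm) (hB_symm : ∀ k, (B k).IsSymm)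
    (hA_anti : ∀ k, 1 ≤ k → k < n → (A k - A (k + 1)).PosSemidef)
    (hA_pos : (A n).PosSemidef)
    (hAB : ∀ j, 1 ≤ j → j ≤ n →
      (∑ k ∈ Finset.Icc 1 j, B k - ∑ k ∈ Finset.Icc 1 j, A k).PosSemidef) :
    ∑ k ∈ Finset.Icc 1 n, (A k * A k).trace ≤
      ∑ k ∈ Finset.Icc 1 n, (A k * B k).trace := by
  have h := key_abel N n A B hn hA_anti hA_pos hAB
  have e : ∀ k ∈ Finset.Icc 1 n, (A k * (B k - A k)).trace
      = (A k * B k).trace - (A k * A k).trace := by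
    intro k _
    rw [Matrix.mul_sub, Matrix.trace_sub]
  rw [Finset.sum_congr rfl e, Finset.sum_sub_distrib] at h
  linarith
end

section
/- (Chung's trace inequality) Let A₁, …, Aₙ and B₁, …, Bₙ be real symmetric N×N matrices such that A₁ ≥ A₂ ≥ ⋯ ≥ Aₙ ≥ 0 in the Loewner order and ∑_{k=1}^{j} A_k ≤ ∑_{k=1}^{j} B_k in the Loewner order for every j ∈ {1, 2, …, n}. Then ∑_{k=1}^{n} Trace(A_k²) ≤ ∑_{k=1}^{n} Trace(B_k²). -/
open Matrix Finset

lemma psd_trace_nonneg {N : ℕ} {M : Matrix (Fin N) (Fin N) ℝ} (hM : M.PosSemidef) :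
    0 ≤ M.trace := by
  rw [Matrix.trace]
  apply Finset.sum_nonneg
  intro i _
  have := hM.diag_nonneg (i := i)
  simpa [Matrix.mulVec_single, dotProduct, Pi.single_apply, Finset.sum_ite_eq] using this

open scoped MatrixOrder in
lemma psd_trace_mul_nonneg {N : ℕ} {P Q : Matrix (Fin N) (Fin N) ℝ}
    (hP : P.PosSemidef) (hQ : Q.PosSemidef) : 0 ≤ (P * Q).trace := by
  have h1 : (P * Q).trace = (CFC.sqrt Q * P * CFC.sqrt Q).trace := by
    rw [← Matrix.trace_mul_cycle, Matrix.mul_assoc, CFC.sqrt_mul_sqrt_self Q hQ.nonneg]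
  rw [h1]
  have : ((CFC.sqrt Q)ᴴ * P * CFC.sqrt Q).PosSemidef := hP.conjTranspose_mul_mul_same _
  rw [(CFC.sqrt_nonneg Q).posSemidef.1.eq] at this
  exact psd_trace_nonneg this

lemma abel_key {N : ℕ} : ∀ n : ℕ, 1 ≤ n → ∀ A C : ℕ → Matrix (Fin N) (Fin N) ℝ,
    (∀ k, 1 ≤ k → k < n → (A k - A (k + 1)).PosSemidef) →
    (A n).PosSemidef →
    (∀ j, 1 ≤ j → j ≤ n → (∑ k ∈ Finset.Icc 1 j, C k).PosSemidef) →
    0 ≤ ∑ k ∈ Finset.Icc 1 n, (A k * C k).trace := by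
  intro n hn
  induction n, hn using Nat.le_induction with
  | base =>
    intro A C _ hpos hS
    have h1 : (∑ k ∈ Finset.Icc 1 1, C k).PosSemidef := hS 1 le_rfl le_rfl
    simp only [Finset.Icc_self, Finset.sum_singleton] at h1 ⊢
    exact psd_trace_mul_nonneg hpos h1
  | succ n hn ih =>
    intro A C hanti hpos hS
    have split : ∀ k, (A k * C k).trace
        = ((A k - A (n + 1)) * C k).trace + (A (n + 1) * C k).trace := by
      intro k
      rw [Matrix.sub_mul, Matrix.trace_sub]
      ring
    calc (0:ℝ) ≤ (∑ k ∈ Finset.Icc 1 n, ((A k - A (n + 1)) * C k).trace)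
          + (A (n + 1) * ∑ k ∈ Finset.Icc 1 (n + 1), C k).trace := by
          have h1 : 0 ≤ ∑ k ∈ Finset.Icc 1 n, ((A k - A (n + 1)) * C k).trace := by
            refine ih (fun k => A k - A (n + 1)) C ?_ ?_ ?_
            · intro k hk1 hk2
              simpa using hanti k hk1 (hk2.trans (Nat.lt_succ_self n))
            · simpa using hanti n hn (Nat.lt_succ_self n)
            · intro j hj1 hj2
              exact hS j hj1 (hj2.trans (Nat.le_succ n))
          have h2 : 0 ≤ (A (n + 1) * ∑ k ∈ Finset.Icc 1 (n + 1), C k).trace :=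
            psd_trace_mul_nonneg hpos (hS (n + 1) (by omega) le_rfl)
          linarith
      _ = ∑ k ∈ Finset.Icc 1 (n + 1), (A k * C k).trace := by
          rw [Finset.mul_sum, Matrix.trace_sum]
          rw [Finset.sum_Icc_succ_top (by omega : 1 ≤ n + 1),
            Finset.sum_Icc_succ_top (by omega : 1 ≤ n + 1)]
          have h3 : ∑ k ∈ Finset.Icc 1 n, (A k * C k).trace
              = ∑ k ∈ Finset.Icc 1 n, (((A k - A (n + 1)) * C k).trace
                + (A (n + 1) * C k).trace) :=
            Finset.sum_congr rfl fun k _ => split k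
          rw [h3, Finset.sum_add_distrib]
          ring


/-- Chung's trace inequality: if `A₁ ≥ ⋯ ≥ Aₙ ≥ 0` in the Loewner order on real
symmetric matrices and `∑_{k=1}^j A_k ≤ ∑_{k=1}^j B_k` for all `j`, then
`∑ Trace(A_k²) ≤ ∑ Trace(B_k²)`. -/
theorem abel_partial_summation_stmt18
    (N : ℕ) (n : ℕ) (hn : 1 ≤ n)
    (A B : ℕ → Matrix (Fin N) (Fin N) ℝ)
    (hA_symm : ∀ k, (A k).IsSymm) (hB_symm : ∀ k, (B k).IsSymm)
    (hA_anti : ∀ k, 1 ≤ k → k < n → (A k - A (k + 1)).PosSemidef)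
    (hA_pos : (A n).PosSemidef)
    (hAB : ∀ j, 1 ≤ j → j ≤ n →
      (∑ k ∈ Finset.Icc 1 j, B k - ∑ k ∈ Finset.Icc 1 j, A k).PosSemidef) :
    ∑ k ∈ Finset.Icc 1 n, (A k * A k).trace ≤
      ∑ k ∈ Finset.Icc 1 n, (B k * B k).trace := by
  set C : ℕ → Matrix (Fin N) (Fin N) ℝ := fun k => B k - A k with hC
  have hkey : 0 ≤ ∑ k ∈ Finset.Icc 1 n, (A k * C k).trace := by
    refine abel_key n hn A C hA_anti hA_pos ?_
    intro j hj1 hj2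
    have := hAB j hj1 hj2
    rwa [← Finset.sum_sub_distrib] at this
  have hsq : ∀ k, 0 ≤ (C k * C k).trace := by
    intro k
    have hsymm : (C k)ᴴ = C k := by
      have h1 := hA_symm k
      have h2 := hB_symm k
      simp only [Matrix.IsSymm] at h1 h2
      have : (C k)ᵀ = C k := by
        simp [hC, Matrix.transpose_sub, h1, h2]
      rw [Matrix.conjTranspose]
      rw [this]
      ext i j
      simp
    have : ((C k)ᴴ * C k).PosSemidef := Matrix.posSemidef_conjTranspose_mul_self _
    rw [hsymm] at this
    exact psd_trace_nonneg this
  have expand : ∀ k, (B k * B k).trace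
      = (A k * A k).trace + (C k * C k).trace + 2 * (A k * C k).trace := by
    intro k
    have hcomm : (B k * A k).trace = (A k * B k).trace := Matrix.trace_mul_comm _ _
    simp only [hC, Matrix.sub_mul, Matrix.mul_sub, Matrix.trace_sub]
    linarith
  calc ∑ k ∈ Finset.Icc 1 n, (A k * A k).trace
      ≤ ∑ k ∈ Finset.Icc 1 n, ((A k * A k).trace + (C k * C k).trace
          + 2 * (A k * C k).trace) := by
        rw [Finset.sum_add_distrib, Finset.sum_add_distrib, ← Finset.mul_sum]
        have := Finset.sum_nonneg (fun k (_ : k ∈ Finset.Icc 1 n) => hsq k)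
        linarith
    _ = ∑ k ∈ Finset.Icc 1 n, (B k * B k).trace := by
        exact Finset.sum_congr rfl (fun k _ => (expand k).symm)
end
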